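/- arXiv:2204.11326 — 11 statements merged into one kernel-verified Lean document; each statement's English description precedes it below -/
import Mathlib

section
/- Let f : ℝ → ℝ be twice continuously differentiable, even, with f(0) = 0, f''(x) > 0 for all x, f'' nonincreasing in |x|, and lim_{|x|→∞} f''(x) = 0. Then for every learning rate η > 2/f''(0) there exists x_η > 0 such that η·f'(x_η) = 2·x_η. -/
/-- Under the subquadratic hypotheses plus `f''(x) → 0` as `|x| → ∞`,
for every learning rate `η > 2 / f''(0)` there exists `x_η > 0` with
`η * f'(x_η) = 2 * x_η` (a 2-periodic solution of gradient descent). -/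
theorem exists_two_periodic_solution
    (f : ℝ → ℝ) (hf : ContDiff ℝ 2 f)
    (heven : ∀ x : ℝ, f x = f (-x)) (h0 : f 0 = 0)
    (hpos : ∀ x : ℝ, 0 < deriv (deriv f) x)
    (hanti : ∀ s t : ℝ, |t| ≤ |s| → deriv (deriv f) s ≤ deriv (deriv f) t)
    (hlim : Filter.Tendsto (deriv (deriv f)) (Filter.cocompact ℝ) (nhds 0)) :
    ∀ η : ℝ, 2 / deriv (deriv f) 0 < η → ∃ x : ℝ, 0 < x ∧ η * deriv f x = 2 * x := by
  intro η hη
  have hd1 : Differentiable ℝ f := hf.differentiable (by norm_num)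
  have hf1 : ContDiff ℝ 1 (deriv f) := by
    have := (contDiff_succ_iff_deriv (n := 1)).mp (by exact_mod_cast hf)
    exact this.2.2
  have hd2 : Differentiable ℝ (deriv f) := hf1.differentiable (by norm_num)
  have hc1 : Continuous (deriv f) := hd2.continuous
  have hc2 : Continuous (deriv (deriv f)) := hf1.continuous_deriv le_rfl
  have hf''0 : 0 < deriv (deriv f) 0 := hpos 0
  have hηpos : 0 < η := lt_trans (div_pos (by norm_num) hf''0) hη
  -- η * f''(0) > 2
  have hη2 : 2 / η < deriv (deriv f) 0 := by
    rw [div_lt_iff₀ hηpos]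
    rw [div_lt_iff₀ hf''0] at hη
    linarith [mul_comm η (deriv (deriv f) 0)]
  -- f'(0) = 0
  have hf'0 : deriv f 0 = 0 := by
    have hfn : f = fun x => f (-x) := funext heven
    have : deriv f 0 = -deriv f (-0) := by
      conv_lhs => rw [hfn]
      exact deriv_comp_neg f 0
    simp at this
    linarith
  -- MVT helper
  have mvt : ∀ a b : ℝ, a < b → ∃ c ∈ Set.Ioo a b,
      deriv (deriv f) c = (deriv f b - deriv f a) / (b - a) := by
    intro a b hab
    exact exists_deriv_eq_slope (deriv f) hab (hc1.continuousOn) (hd2.differentiableOn)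
  -- small x0 with f''(x0) > 2/η
  have hev : ∀ᶠ x in nhds (0:ℝ), 2 / η < deriv (deriv f) x :=
    (hc2.continuousAt (x := 0)).eventually_const_lt hη2
  obtain ⟨δ, hδpos, hδ⟩ := Metric.eventually_nhds_iff.mp hev
  set x0 := δ / 2 with hx0def
  have hx0pos : 0 < x0 := by positivity
  have hx0 : 2 / η < deriv (deriv f) x0 := by
    apply hδ
    rw [Real.dist_eq]
    simp only [sub_zero]
    rw [abs_of_pos hx0pos]
    linarith
  -- g x0 > 0
  have hg0 : 2 * x0 < η * deriv f x0 := by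
    obtain ⟨c, hc, hceq⟩ := mvt 0 x0 hx0pos
    have hcle : deriv (deriv f) x0 ≤ deriv (deriv f) c := by
      apply hanti
      rw [abs_of_pos hc.1, abs_of_pos hx0pos]
      exact le_of_lt hc.2
    have : 2 / η < (deriv f x0 - deriv f 0) / (x0 - 0) := by
      rw [← hceq]; linarith
    rw [hf'0] at this
    simp at this
    rw [div_lt_div_iff₀ hηpos hx0pos] at this
    linarith
  -- tail bound
  have htop : Filter.Tendsto (deriv (deriv f)) Filter.atTop (nhds 0) := by
    refine hlim.mono_left ?_
    rw [cocompact_eq_atBot_atTop]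
    exact le_sup_right
  have hev2 : ∀ᶠ x in Filter.atTop, deriv (deriv f) x < 1 / η :=
    htop.eventually_lt_const (by positivity)
  obtain ⟨a0, ha0⟩ := Filter.eventually_atTop.mp hev2
  set a := max a0 x0 with hadef
  have haa0 : a0 ≤ a := le_max_left _ _
  have hax0 : x0 ≤ a := le_max_right _ _
  set x1 := max a (η * deriv f a - a) + 1 with hx1def
  have hax1 : a < x1 := lt_of_le_of_lt (le_max_left _ _) (by linarith [le_refl (max a (η * deriv f a - a))])
  have hg1 : η * deriv f x1 - 2 * x1 < 0 := by
    obtain ⟨c, hc, hceq⟩ := mvt a x1 hax1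
    have hcb : deriv (deriv f) c < 1 / η := ha0 c (le_trans haa0 (le_of_lt hc.1))
    have hslope : (deriv f x1 - deriv f a) / (x1 - a) < 1 / η := by rw [← hceq]; exact hcb
    have hx1a : 0 < x1 - a := by linarith
    rw [div_lt_div_iff₀ hx1a hηpos] at hslope
    have h1 : η * deriv f x1 ≤ η * deriv f a + (x1 - a) := by
      nlinarith
    have h2 : η * deriv f a - a ≤ x1 - 1 := by
      have := le_max_right a (η * deriv f a - a)
      linarith
    linarith
  -- IVT
  have hx01 : x0 < x1 := lt_of_le_of_lt hax0 hax1
  have hgc : ContinuousOn (fun x => η * deriv f x - 2 * x) (Set.Icc x0 x1) :=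
    ((continuous_const.mul hc1).sub (continuous_const.mul continuous_id)).continuousOn
  have := intermediate_value_Icc' (le_of_lt hx01) hgc
  have hmem : (0:ℝ) ∈ Set.Icc (η * deriv f x1 - 2 * x1) (η * deriv f x0 - 2 * x0) :=
    ⟨le_of_lt hg1, by linarith⟩
  obtain ⟨x, hxmem, hxeq⟩ := this hmem
  refine ⟨x, lt_of_lt_of_le hx0pos hxmem.1, ?_⟩
  simp only at hxeq
  linarith
end

section
/- Let f : ℝ → ℝ be twice continuously differentiable, even, with f(0) = 0, f''(x) > 0 for all x, f'' nonincreasing in |x|, and lim_{|x|→∞} f''(x) = 0. If 2/f''(0) < η₁ ≤ η₂ and x_{η₁} > 0, x_{η₂} > 0 satisfy η₁ f'(x_{η₁}) = 2 x_{η₁} and η₂ f'(x_{η₂}) = 2 x_{η₂}, and if moreover f''(s) < f''(t) whenever |t| < |s| (so each solution is unique), then x_{η₁} ≤ x_{η₂}; that is, x_η is monotonically increasing as a function of η. -/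
lemma aux_deriv2_diff (f : ℝ → ℝ) (hf : ContDiff ℝ 2 f) :
    Differentiable ℝ (deriv f) := by
  rw [show (2 : WithTop ℕ∞) = 1 + 1 from rfl] at hf
  exact (contDiff_succ_iff_deriv.mp hf).2.2.differentiable one_ne_zero

/-- For s > 0, s * f''(s) < f'(s). -/
lemma aux_key (f : ℝ → ℝ) (hf : ContDiff ℝ 2 f)
    (heven : ∀ x : ℝ, f x = f (-x))
    (hstrict : ∀ s t : ℝ, |t| < |s| → deriv (deriv f) s < deriv (deriv f) t)
    (s : ℝ) (hs : 0 < s) : s * deriv (deriv f) s < deriv f s := by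
  have hd2 := aux_deriv2_diff f hf
  have hA : deriv f 0 = 0 := by
    have : deriv f 0 = deriv (fun x => f (-x)) 0 := by
      congr 1; funext x; exact heven x
    rw [deriv_comp_neg] at this
    simp at this
    linarith
  set c := deriv (deriv f) s with hc
  have hmono : StrictMonoOn (fun x => deriv f x - c * x) (Set.Icc 0 s) := by
    apply strictMonoOn_of_deriv_pos (convex_Icc 0 s)
    · exact (hd2.continuous.sub (continuous_const.mul continuous_id)).continuousOn
    · intro x hx
      rw [interior_Icc] at hx
      have hcx : deriv (fun x => c * x) x = c := by
        simpa using ((hasDerivAt_id x).const_mul c).deriv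
      have : deriv (fun x => deriv f x - c * x) x = deriv (deriv f) x - c := by
        rw [deriv_fun_sub (hd2 x) (by fun_prop), hcx]
      rw [this]
      have := hstrict s x (by rw [abs_of_pos hx.1, abs_of_pos hs]; exact hx.2)
      linarith
  have := hmono (Set.left_mem_Icc.mpr hs.le) (Set.right_mem_Icc.mpr hs.le) hs
  simp [hA] at this
  linarith

/-- For 0 < s < t, s * f'(t) < t * f'(s). -/
lemma aux_slope (f : ℝ → ℝ) (hf : ContDiff ℝ 2 f)
    (heven : ∀ x : ℝ, f x = f (-x))
    (hanti : ∀ s t : ℝ, |t| ≤ |s| → deriv (deriv f) s ≤ deriv (deriv f) t)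
    (hstrict : ∀ s t : ℝ, |t| < |s| → deriv (deriv f) s < deriv (deriv f) t)
    (s t : ℝ) (hs : 0 < s) (hst : s < t) : s * deriv f t < t * deriv f s := by
  have hd2 := aux_deriv2_diff f hf
  obtain ⟨x, hx, hxe⟩ := exists_hasDerivAt_eq_slope (deriv f) (deriv (deriv f)) hst
    hd2.continuous.continuousOn (fun x _ => (hd2 x).hasDerivAt)
  have h1 : deriv f t - deriv f s = (t - s) * deriv (deriv f) x := by
    rw [hxe, mul_div_assoc', mul_comm, mul_div_assoc, div_self (by linarith : t - s ≠ 0), mul_one]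
  have h2 : deriv (deriv f) x ≤ deriv (deriv f) s := by
    apply hanti x s
    rw [abs_of_pos hs, abs_of_pos (hs.trans hx.1)]
    exact hx.1.le
  have h3 := aux_key f hf heven hstrict s hs
  nlinarith [mul_le_mul_of_nonneg_left h2 (by nlinarith [hx.1, hx.2] : (0:ℝ) ≤ s * (t - s)),
    mul_lt_mul_of_pos_left h3 (by linarith : (0:ℝ) < t - s)]

/-- With strictly subquadratic `f` (so the positive solution of
`η f'(x) = 2x` is unique for each `η > 2/f''(0)`), the solution `x_η` is
monotonically increasing in `η`. -/
theorem two_periodic_solution_monotone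
    (f : ℝ → ℝ) (hf : ContDiff ℝ 2 f)
    (heven : ∀ x : ℝ, f x = f (-x)) (h0 : f 0 = 0)
    (hpos : ∀ x : ℝ, 0 < deriv (deriv f) x)
    (hanti : ∀ s t : ℝ, |t| ≤ |s| → deriv (deriv f) s ≤ deriv (deriv f) t)
    (hstrict : ∀ s t : ℝ, |t| < |s| → deriv (deriv f) s < deriv (deriv f) t)
    (hlim : Filter.Tendsto (deriv (deriv f)) (Filter.cocompact ℝ) (nhds 0))
    (η₁ η₂ : ℝ) (hη₁ : 2 / deriv (deriv f) 0 < η₁) (hη₁₂ : η₁ ≤ η₂)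
    (x₁ x₂ : ℝ) (hx₁ : 0 < x₁) (hx₂ : 0 < x₂)
    (heq₁ : η₁ * deriv f x₁ = 2 * x₁) (heq₂ : η₂ * deriv f x₂ = 2 * x₂) :
    x₁ ≤ x₂ := by
  by_contra h
  push_neg at h
  have hη₁pos : 0 < η₁ := lt_trans (div_pos two_pos (hpos 0)) hη₁
  have hslope := aux_slope f hf heven hanti hstrict x₂ x₁ hx₂ h
  have hf2 : 0 < deriv f x₂ := by
    have := aux_key f hf heven hstrict x₂ hx₂
    nlinarith [hpos x₂]
  have e1 : η₁ * (x₂ * deriv f x₁) = 2 * x₁ * x₂ := by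
    rw [mul_left_comm, heq₁]; ring
  have e2 : η₂ * (x₁ * deriv f x₂) = 2 * x₁ * x₂ := by
    rw [mul_left_comm, heq₂]; ring
  nlinarith [mul_lt_mul_of_pos_left hslope hη₁pos,
    mul_le_mul_of_nonneg_right hη₁₂ (mul_pos hx₁ hf2).le]
end

section
/- Let f : ℝ → ℝ be twice continuously differentiable, even, with f(0) = 0, f''(x) > 0 for all x, f''(s) < f''(t) whenever |t| < |s|, and lim_{|x|→∞} f''(x) = 0. Then the function h(x) = f'(x)/x is strictly decreasing on (0, ∞), and consequently for each η > 2/f''(0) the positive solution x_η of η·f'(x_η) = 2·x_η is unique. -/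
/-- For strictly subquadratic `f` with `f'' → 0` at infinity, the
function `h x = f' x / x` is strictly decreasing on `(0, ∞)`, and consequently
for each `η > 2 / f''(0)` the positive solution of `η f'(x) = 2x` is unique. -/
theorem avg_second_deriv_strict_anti_and_unique_solution
    (f : ℝ → ℝ) (hf : ContDiff ℝ 2 f)
    (heven : ∀ x : ℝ, f x = f (-x)) (h0 : f 0 = 0)
    (hpos : ∀ x : ℝ, 0 < deriv (deriv f) x)
    (hstrict : ∀ s t : ℝ, |t| < |s| → deriv (deriv f) s < deriv (deriv f) t)
    (hlim : Filter.Tendsto (deriv (deriv f)) (Filter.cocompact ℝ) (nhds 0)) :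
    (∀ x y : ℝ, 0 < x → x < y → deriv f y / y < deriv f x / x) ∧
    (∀ η : ℝ, 2 / deriv (deriv f) 0 < η →
      ∀ a b : ℝ, 0 < a → 0 < b →
        η * deriv f a = 2 * a → η * deriv f b = 2 * b → a = b) := by
  have hf1 : ContDiff ℝ 1 (deriv f) := by
    exact (contDiff_succ_iff_deriv.mp (by exact_mod_cast hf)).2.2
  have hd1 : Differentiable ℝ (deriv f) := hf1.differentiable one_ne_zero
  have hderiv0 : deriv f 0 = 0 := by
    have : deriv f = fun x => -deriv f (-x) := by
      funext x
      have : f = fun x => f (-x) := funext heven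
      conv_lhs => rw [this]
      simp [deriv_comp_neg]
    have h := congrFun this 0
    simp at h
    linarith [h]
  have key : ∀ x : ℝ, 0 < x → x * deriv (deriv f) x < deriv f x := by
    intro x hx
    obtain ⟨c, hc, hcs⟩ := exists_hasDerivAt_eq_slope (deriv f) (deriv (deriv f)) hx
      (hd1.continuous.continuousOn) (fun t _ => (hd1 t).hasDerivAt)
    have hlt : deriv (deriv f) x < deriv (deriv f) c := by
      apply hstrict
      rw [abs_of_pos hc.1, abs_of_pos hx]
      exact hc.2
    rw [hderiv0] at hcs
    have : deriv f x = x * deriv (deriv f) c := by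
      rw [sub_zero, sub_zero, eq_div_iff hx.ne'] at hcs
      linarith [hcs]
    nlinarith
  have main : ∀ x y : ℝ, 0 < x → x < y → deriv f y / y < deriv f x / x := by
    intro x y hx hxy
    have hy : 0 < y := hx.trans hxy
    obtain ⟨d, hd, hds⟩ := exists_hasDerivAt_eq_slope (deriv f) (deriv (deriv f)) hxy
      (hd1.continuous.continuousOn) (fun t _ => (hd1 t).hasDerivAt)
    have hlt : deriv (deriv f) d < deriv (deriv f) x := by
      apply hstrict
      rw [abs_of_pos hx, abs_of_pos (hx.trans hd.1)]
      exact hd.1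
    have hslope : deriv f y - deriv f x = deriv (deriv f) d * (y - x) := by
      rw [eq_div_iff (by linarith : y - x ≠ 0)] at hds
      linarith [hds]
    have hk := key x hx
    have hsx : (deriv f y - deriv f x) * x = deriv (deriv f) d * (y - x) * x := by
      rw [hslope]
    rw [div_lt_div_iff₀ hy hx]
    nlinarith [mul_lt_mul_of_pos_right hlt (mul_pos (sub_pos.mpr hxy) hx),
      mul_lt_mul_of_pos_left hk (sub_pos.mpr hxy), hsx]
  refine ⟨main, ?_⟩
  intro η hη a b ha hb hea heb
  have hη0 : η ≠ 0 := by
    intro h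
    rw [h] at hea
    simp at hea
    linarith
  have hab : deriv f a * b = deriv f b * a := by
    have h1 : η * (deriv f a * b) = 2 * a * b := by rw [← mul_assoc, hea]
    have h2 : η * (deriv f b * a) = 2 * b * a := by rw [← mul_assoc, heb]
    have : η * (deriv f a * b) = η * (deriv f b * a) := by rw [h1, h2]; ring
    exact mul_left_cancel₀ hη0 this
  by_contra hne
  rcases lt_or_gt_of_ne hne with h | h
  · have := main a b ha h
    rw [div_lt_div_iff₀ hb ha] at this
    nlinarith
  · have := main b a hb h
    rw [div_lt_div_iff₀ ha hb] at this
    nlinarith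
end

section
/- Let f : ℝ → ℝ be twice continuously differentiable, even, with f(0) = 0, f''(x) > 0 for all x, and f''(s) < f''(t) whenever |t| < |s|. Let η = 2/f''(0). Then for every x ≠ 0 one has |x − η f'(x)| < |x|, and consequently the gradient descent iterates x_{t+1} = x_t − η f'(x_t) converge to 0 from any initialization x₀. -/
open Filter Set
lemma tendsto_zero_of_abs_lt (g : ℝ → ℝ) (hg : Continuous g) (hg0 : g 0 = 0)
    (hlt : ∀ x : ℝ, x ≠ 0 → |g x| < |x|) (x : ℕ → ℝ)
    (hx : ∀ t : ℕ, x (t + 1) = g (x t)) :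
    Tendsto x atTop (nhds 0) := by
  have hle : ∀ y : ℝ, |g y| ≤ |y| := by
    intro y
    rcases eq_or_ne y 0 with h | h
    · simp [h, hg0]
    · exact (hlt y h).le
  have hstep : ∀ t, |x (t + 1)| ≤ |x t| := by
    intro t; rw [hx t]; exact hle (x t)
  have anti : Antitone fun t => |x t| := antitone_nat_of_succ_le hstep
  have hbdd : BddBelow (Set.range fun t => |x t|) :=
    ⟨0, by rintro _ ⟨t, rfl⟩; exact abs_nonneg _⟩
  set L : ℝ := ⨅ t, |x t| with hL_def
  have haL : Tendsto (fun t => |x t|) atTop (nhds L) := tendsto_atTop_ciInf anti hbdd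
  have hL0 : 0 ≤ L := le_ciInf fun t => abs_nonneg _
  have hLzero : L = 0 := by
    by_contra hLne
    have hmem : ∀ t, x t ∈ Icc (-(|x 0|)) (|x 0|) := by
      intro t
      exact abs_le.mp (anti (Nat.zero_le t))
    obtain ⟨y, _, φ, hφ, hxy⟩ :=
      tendsto_subseq_of_bounded (Metric.isBounded_Icc (-(|x 0|)) (|x 0|)) hmem
    have hφtop : Tendsto φ atTop atTop := hφ.tendsto_atTop
    have hyL : |y| = L := by
      have h1 : Tendsto (fun k => |x (φ k)|) atTop (nhds |y|) :=
        (continuous_abs.continuousAt.tendsto).comp hxy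
      have h2 : Tendsto (fun k => |x (φ k)|) atTop (nhds L) := haL.comp hφtop
      exact tendsto_nhds_unique h1 h2
    have hy0 : y ≠ 0 := by
      intro h; rw [h] at hyL; simp at hyL; exact hLne hyL.symm
    have h3 : Tendsto (fun k => x (φ k + 1)) atTop (nhds (g y)) := by
      have : Tendsto (fun k => g (x (φ k))) atTop (nhds (g y)) :=
        (hg.continuousAt.tendsto).comp hxy
      simpa [hx] using this
    have h4 : Tendsto (fun k => |x (φ k + 1)|) atTop (nhds L) :=
      haL.comp (tendsto_atTop_mono (fun k => Nat.le_succ (φ k)) hφtop)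
    have h5 : Tendsto (fun k => |x (φ k + 1)|) atTop (nhds |g y|) :=
      (continuous_abs.continuousAt.tendsto).comp h3
    have hgyL : |g y| = L := tendsto_nhds_unique h5 h4
    have hlt' : |g y| < |y| := hlt y hy0
    rw [hgyL, hyL] at hlt'
    exact lt_irrefl L hlt'
  have haz : Tendsto (fun t => |x t|) atTop (nhds 0) := hLzero ▸ haL
  have hneg : Tendsto (fun t => -(|x t|)) atTop (nhds 0) := by simpa using haz.neg
  exact tendsto_of_tendsto_of_tendsto_of_le_of_le hneg haz
    (fun t => neg_abs_le (x t)) (fun t => le_abs_self (x t))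

/-- For strictly subquadratic `f` and the critical learning rate
`η = 2 / f''(0)`, every `x ≠ 0` satisfies `|x - η f'(x)| < |x|`, and hence
gradient descent converges to `0` from any initialization. -/
theorem gd_converges_critical_lr
    (f : ℝ → ℝ) (hf : ContDiff ℝ 2 f)
    (heven : ∀ x : ℝ, f x = f (-x)) (h0 : f 0 = 0)
    (hpos : ∀ x : ℝ, 0 < deriv (deriv f) x)
    (hstrict : ∀ s t : ℝ, |t| < |s| → deriv (deriv f) s < deriv (deriv f) t)
    (η : ℝ) (hη : η = 2 / deriv (deriv f) 0) :
    (∀ x : ℝ, x ≠ 0 → |x - η * deriv f x| < |x|) ∧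
    (∀ x : ℕ → ℝ, (∀ t : ℕ, x (t + 1) = x t - η * deriv f (x t)) →
      Filter.Tendsto x Filter.atTop (nhds 0)) := by
  have hf2 : ContDiff ℝ ((1 : ℕ∞) + 1) f := by exact_mod_cast hf
  obtain ⟨hdiff, -, hdf1⟩ := contDiff_succ_iff_deriv.mp hf2
  have hdf : Differentiable ℝ (deriv f) := hdf1.differentiable (by simp)
  have hcont : Continuous (deriv f) := hdf.continuous
  -- f' is odd
  have hodd : ∀ x : ℝ, deriv f x = -deriv f (-x) := by
    intro x
    have hfe : f = fun y => f (-y) := funext heven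
    calc deriv f x = deriv (fun y => f (-y)) x := by rw [← hfe]
      _ = -deriv f (-x) := deriv_comp_neg f x
  have hd0 : deriv f 0 = 0 := by
    have := hodd 0; simp at this; linarith
  set B : ℝ := deriv (deriv f) 0 with hB_def
  have hBpos : 0 < B := hpos 0
  -- key inequality for positive x
  have key : ∀ x : ℝ, 0 < x → |x - η * deriv f x| < |x| := by
    intro x hx
    obtain ⟨c, hc, hceq⟩ := exists_hasDerivAt_eq_slope (deriv f) (deriv (deriv f)) hx
      (hcont.continuousOn) (fun y _ => (hdf y).hasDerivAt)
    have hxne : x ≠ 0 := ne_of_gt hx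
    have hfx : deriv f x = deriv (deriv f) c * x := by
      rw [hceq, hd0]; field_simp; ring
    set A : ℝ := deriv (deriv f) c with hA_def
    have hApos : 0 < A := hpos c
    have hAB : A < B := hstrict c 0 (by
      rw [abs_zero, abs_of_pos hc.1]; exact hc.1)
    have heq : x - η * deriv f x = x * (1 - 2 * A / B) := by
      rw [hfx, hη]; field_simp
    rw [heq, abs_mul, abs_of_pos hx]
    have h1 : |1 - 2 * A / B| < 1 := by
      rw [abs_lt]
      constructor
      · have : 2 * A / B < 2 := by
          rw [div_lt_iff₀ hBpos]; nlinarith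
        linarith
      · have : 0 < 2 * A / B := by positivity
        linarith
    calc x * |1 - 2 * A / B| < x * 1 := mul_lt_mul_of_pos_left h1 hx
      _ = x := mul_one x
  have main : ∀ x : ℝ, x ≠ 0 → |x - η * deriv f x| < |x| := by
    intro x hxne
    rcases lt_trichotomy x 0 with hneg | hzero | hposx
    · have hnx : 0 < -x := by linarith
      have hkey := key (-x) hnx
      have heq : x - η * deriv f x = -(-x - η * deriv f (-x)) := by
        rw [hodd x]; ring
      rw [heq, abs_neg]
      calc |(-x) - η * deriv f (-x)| < |(-x)| := hkey
        _ = |x| := abs_neg x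
    · exact absurd hzero hxne
    · exact key x hposx
  refine ⟨main, ?_⟩
  intro x hx
  exact tendsto_zero_of_abs_lt (fun y => y - η * deriv f y)
    (continuous_id.sub (continuous_const.mul hcont))
    (by simp [hd0]) main x hx
end

section
/- Let f : ℝ → ℝ be twice continuously differentiable, even, with f(0) = 0, f''(x) > 0 for all x, f''(s) < f''(t) whenever |t| < |s|, and lim_{|x|→∞} f''(x) = 0. Fix η > 2/f''(0) and let x_η > 0 satisfy η f'(x_η) = 2 x_η. Then for every x > 0 with x ≠ x_η, the one-step gradient descent map satisfies |(x − η f'(x)) + x_η| < |x − x_η|; that is, the distance of the iterate to the 2-periodic orbit {x_η, −x_η} strictly decreases. -/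
/-- For strictly subquadratic `f`, `η > 2/f''(0)` and the positive
2-periodic point `x_η` (with `η f'(x_η) = 2 x_η`), each gradient descent step
from `x > 0`, `x ≠ x_η` strictly decreases the distance to the orbit
`{x_η, -x_η}`: `|(x - η f'(x)) + x_η| < |x - x_η|`. -/
theorem gd_step_contracts_to_periodic_orbit
    (f : ℝ → ℝ) (hf : ContDiff ℝ 2 f)
    (heven : ∀ x : ℝ, f x = f (-x)) (h0 : f 0 = 0)
    (hpos : ∀ x : ℝ, 0 < deriv (deriv f) x)
    (hstrict : ∀ s t : ℝ, |t| < |s| → deriv (deriv f) s < deriv (deriv f) t)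
    (hlim : Filter.Tendsto (deriv (deriv f)) (Filter.cocompact ℝ) (nhds 0))
    (η : ℝ) (hη : 2 / deriv (deriv f) 0 < η)
    (xη : ℝ) (hxη : 0 < xη) (heq : η * deriv f xη = 2 * xη) :
    ∀ x : ℝ, 0 < x → x ≠ xη → |(x - η * deriv f x) + xη| < |x - xη| := by
  have hf2pos := hpos 0
  have hηpos : 0 < η := lt_trans (div_pos two_pos hf2pos) hη
  have hdf1 : ContDiff ℝ 1 (deriv f) :=
    (contDiff_succ_iff_deriv.mp (show ContDiff ℝ (1+1) f by exact_mod_cast hf)).2.2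
  have hdf' : Differentiable ℝ (deriv f) := hdf1.differentiable one_ne_zero
  -- deriv f 0 = 0
  have hodd : deriv f 0 = 0 := by
    have h1 : deriv (fun x => f (-x)) 0 = -deriv f 0 := by
      simpa using deriv_comp_neg (f := f) (x := (0:ℝ))
    have h2 : deriv (fun x => f (-x)) 0 = deriv f 0 := by
      congr 1; funext x; exact (heven x).symm
    linarith [h1, h2]
  have hmono : StrictMono (deriv f) := strictMono_of_deriv_pos hpos
  set g : ℝ → ℝ := fun x => η * deriv f x - 2 * x with hgdef
  have hgderiv : ∀ x : ℝ, HasDerivAt g (η * deriv (deriv f) x - 2) x := by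
    intro x
    have := (((hdf' x).hasDerivAt.const_mul η).sub ((hasDerivAt_id x).const_mul (2:ℝ)))
    simp at this; exact this
  have hganti : StrictAntiOn (deriv g) (Set.Ioi (0:ℝ)) := by
    intro s hs t ht hst
    rw [(hgderiv s).deriv, (hgderiv t).deriv]
    have habs : |s| < |t| := by
      rw [abs_of_pos hs, abs_of_pos (lt_trans hs hst)]; exact hst
    have := hstrict t s habs
    nlinarith
  have hgcont : Continuous g :=
    (continuous_const.mul hdf1.continuous).sub (continuous_const.mul continuous_id)
  have hconc : StrictConcaveOn ℝ (Set.Ici (0:ℝ)) g := by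
    apply StrictAntiOn.strictConcaveOn_of_deriv (convex_Ici 0) hgcont.continuousOn
    simpa [interior_Ici] using hganti
  have hg0 : g 0 = 0 := by simp [hgdef, hodd]
  have hgxη : g xη = 0 := by simp [hgdef]; linarith
  -- g > 0 on (0, xη)
  have hg_pos : ∀ x : ℝ, 0 < x → x < xη → 0 < g x := by
    intro x hx hlt
    have hb : 0 < x / xη := div_pos hx hxη
    have hb1 : x / xη < 1 := (div_lt_one hxη).mpr hlt
    have := hconc.2 (Set.self_mem_Ici) (by exact le_of_lt hxη : xη ∈ Set.Ici (0:ℝ))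
      (by intro h; exact absurd h.symm (ne_of_gt hxη)) (by linarith : (0:ℝ) < 1 - x / xη)
      hb (by ring)
    have hx' : (1 - x / xη) • (0:ℝ) + (x / xη) • xη = x := by
      field_simp
      simp [smul_eq_mul, hxη.ne']
    rw [hx', hg0, hgxη] at this
    simpa using this
  -- g < 0 on (xη, ∞)
  have hg_neg : ∀ x : ℝ, xη < x → g x < 0 := by
    intro x hlt
    have hx : 0 < x := lt_trans hxη hlt
    have hb : 0 < xη / x := div_pos hxη hx
    have hb1 : xη / x < 1 := (div_lt_one hx).mpr hlt
    have := hconc.2 (Set.self_mem_Ici) (by exact le_of_lt hx : x ∈ Set.Ici (0:ℝ))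
      (by intro h; exact absurd h.symm (ne_of_gt hx)) (by linarith : (0:ℝ) < 1 - xη / x)
      hb (by ring)
    have hx' : (1 - xη / x) • (0:ℝ) + (xη / x) • x = xη := by
      field_simp
      simp [smul_eq_mul, hx.ne']
    rw [hx', hg0, hgxη] at this
    have h3 : (xη / x) * g x < 0 := by simpa using this
    by_contra hge
    push_neg at hge
    exact absurd h3 (not_lt.mpr (mul_nonneg hb.le hge))
  intro x hx hne
  rcases lt_or_gt_of_ne hne with hlt | hgt
  · -- 0 < x < xη
    have h1 : 0 < g x := hg_pos x hx hlt
    have h2 : η * deriv f x < η * deriv f xη :=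
      mul_lt_mul_of_pos_left (hmono hlt) hηpos
    have h1' : 2 * x < η * deriv f x := by simp [hgdef] at h1; linarith
    have habs : |x - xη| = xη - x := by rw [abs_of_neg (by linarith : x - xη < 0)]; ring
    rw [habs, abs_lt]
    constructor <;> linarith
  · -- xη < x
    have h1 : g x < 0 := hg_neg x hgt
    have h2 : η * deriv f xη < η * deriv f x :=
      mul_lt_mul_of_pos_left (hmono hgt) hηpos
    have h1' : η * deriv f x < 2 * x := by simp [hgdef] at h1; linarith
    have habs : |x - xη| = x - xη := abs_of_pos (by linarith)
    rw [habs, abs_lt]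
    constructor <;> linarith
end

section
/- Let f : ℝ → ℝ be twice continuously differentiable, even, with f(0) = 0, f''(x) > 0 for all x, f''(s) < f''(t) whenever |t| < |s|, and lim_{|x|→∞} f''(x) = 0. Fix η > 2/f''(0) and let x_η > 0 be the unique positive solution of η f'(x_η) = 2 x_η. Then there is a set A ⊂ ℝ of Lebesgue measure zero (indeed countable) such that for every initialization x₀ ∉ A, the gradient descent trajectory x_{t+1} = x_t − η f'(x_t) converges to the 2-periodic solution {±x_η}: namely |x_t| → x_η and x_t + x_{t+1} → 0 as t → ∞. -/
open Filter Set

/-- Auxiliary convergence lemma: if `V z = ||z| - xη|` is a (strict) Lyapunov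
function for the map `z ↦ -S z`, then `|x t| → xη` along any orbit avoiding `0`. -/
private lemma gd_aux (S : ℝ → ℝ) (hS : Continuous S) (xη : ℝ) (hxη : 0 < xη)
    (hkey : ∀ u : ℝ, u ≠ 0 →
      |(|S u|) - xη| ≤ |(|u|) - xη| ∧ (|u| ≠ xη → |(|S u|) - xη| < |(|u|) - xη|))
    (x : ℕ → ℝ) (hrec : ∀ t, x (t + 1) = -S (x t)) (hne : ∀ t, x t ≠ 0) :
    Filter.Tendsto (fun t => |x t|) Filter.atTop (nhds xη) := by
  set V : ℕ → ℝ := fun t => |(|x t|) - xη| with hV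
  have hstep : ∀ t, V (t + 1) ≤ V t := by
    intro t
    have h := (hkey (x t) (hne t)).1
    simpa [hV, hrec t, abs_neg] using h
  have hstep' : ∀ t, |x t| ≠ xη → V (t + 1) < V t := by
    intro t ht
    have h := (hkey (x t) (hne t)).2 ht
    simpa [hV, hrec t, abs_neg] using h
  have hanti : Antitone V := antitone_nat_of_succ_le hstep
  have hbdd : BddBelow (Set.range V) := ⟨0, by rintro v ⟨t, rfl⟩; exact abs_nonneg _⟩
  set δ := ⨅ t, V t with hδ
  have hVδ : Tendsto V atTop (nhds δ) := tendsto_atTop_ciInf hanti hbdd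
  have hδle : ∀ t, δ ≤ V t := fun t => ciInf_le hbdd t
  have hδnn : 0 ≤ δ := le_ciInf fun t => abs_nonneg _
  have hδ0 : δ = 0 := by
    by_contra hδne
    have hδpos : 0 < δ := lt_of_le_of_ne hδnn (Ne.symm hδne)
    have hgt : ∀ t, δ < V t := by
      intro t
      rcases lt_or_eq_of_le (hδle t) with h | h
      · exact h
      · exfalso
        rcases eq_or_ne (|x t|) xη with he | hne'
        · have : V t = 0 := by simp [hV, he]
          rw [← h] at this; exact hδne this
        · have h2 := hstep' t hne'
          have h3 := hδle (t + 1)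
          rw [← h] at h2; linarith
    -- the orbit is bounded
    have hbd : ∀ t, x t ∈ Set.Icc (-(xη + V 0)) (xη + V 0) := by
      intro t
      have h1 : V t ≤ V 0 := hanti (Nat.zero_le t)
      have h2 : |x t| - xη ≤ V 0 ∧ -(V 0) ≤ |x t| - xη := by
        constructor
        · exact le_trans (le_abs_self _) h1
        · exact le_trans (neg_le_neg h1) (neg_abs_le _)
      have : |x t| ≤ xη + V 0 := by linarith [h2.1]
      exact abs_le.mp this
    obtain ⟨v, -, φ, hφ, hvx⟩ :=
      tendsto_subseq_of_bounded (Metric.isBounded_Icc (-(xη + V 0)) (xη + V 0)) hbd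
    -- limit of the Lyapunov values along the subsequence
    have hcont : Continuous fun z : ℝ => |(|z|) - xη| :=
      (continuous_abs.sub continuous_const).abs
    have hVφ : Tendsto (fun k => V (φ k)) atTop (nhds δ) := hVδ.comp hφ.tendsto_atTop
    have hVφ' : Tendsto (fun k => V (φ k)) atTop (nhds (|(|v|) - xη|)) := by
      have := (hcont.tendsto v).comp hvx
      simpa [hV, Function.comp_def] using this
    have hveq : |(|v|) - xη| = δ := tendsto_nhds_unique hVφ' hVφ
    -- limit of the next-step Lyapunov values
    have hφ1 : Tendsto (fun k => φ k + 1) atTop atTop :=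
      tendsto_atTop_mono (fun k => le_trans (hφ.id_le k) (Nat.le_succ _)) tendsto_id
    have hV1 : Tendsto (fun k => V (φ k + 1)) atTop (nhds δ) := hVδ.comp hφ1
    have hc2 : Continuous fun z : ℝ => |(|S z|) - xη| :=
      ((continuous_abs.comp hS).sub continuous_const).abs
    have hV1' : Tendsto (fun k => V (φ k + 1)) atTop (nhds (|(|S v|) - xη|)) := by
      have := (hc2.tendsto v).comp hvx
      have heqf : (fun k => V (φ k + 1)) = fun k => |(|S (x (φ k))|) - xη| := by
        funext k; simp [hV, hrec (φ k), abs_neg]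
      rw [heqf]
      simpa [Function.comp_def] using this
    have hSveq : |(|S v|) - xη| = δ := tendsto_nhds_unique hV1' hV1
    by_cases hv0 : v = 0
    · -- then δ = xη, and all |x t| > 2 xη, contradicting v = 0
      have hδxη : δ = xη := by
        rw [← hveq, hv0]; simp [abs_of_nonneg (le_of_lt hxη)]
      have h2xη : ∀ t, 2 * xη < |x t| := by
        intro t
        have h := hgt t
        rw [hδxη] at h
        rcases lt_abs.mp h with h' | h'
        · linarith
        · exfalso; have := abs_nonneg (x t); linarith
      have hvabs : Tendsto (fun k => |x (φ k)|) atTop (nhds (|v|)) := by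
        have := hvx.abs; simpa [Function.comp] using this
      have : 2 * xη ≤ |v| := ge_of_tendsto' hvabs (fun k => (h2xη (φ k)).le)
      rw [hv0] at this; simp at this; linarith
    · rcases eq_or_ne (|v|) xη with hvx' | hvx'
      · have : δ = 0 := by rw [← hveq, hvx']; simp
        exact hδne this
      · have h := (hkey v hv0).2 hvx'
        rw [hveq, hSveq] at h
        exact lt_irrefl _ h
  -- conclude
  have hVlim : Tendsto V atTop (nhds 0) := hδ0 ▸ hVδ
  rw [← tendsto_sub_nhds_zero_iff]
  exact (tendsto_zero_iff_abs_tendsto_zero _).mpr hVlim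

/-- For strictly subquadratic `f` with `f'' → 0` at infinity,
`η > 2/f''(0)` and the unique positive solution `x_η` of `η f'(x_η) = 2 x_η`,
there is a countable (hence Lebesgue-null) set `A ⊆ ℝ` such that for every
initialization `x₀ ∉ A` the gradient descent trajectory converges to the
2-periodic solution `{± x_η}`: `|x_t| → x_η` and `x_t + x_{t+1} → 0`. -/
theorem gd_converges_to_two_periodic_solution
    (f : ℝ → ℝ) (hf : ContDiff ℝ 2 f)
    (heven : ∀ x : ℝ, f x = f (-x)) (h0 : f 0 = 0)
    (hpos : ∀ x : ℝ, 0 < deriv (deriv f) x)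
    (hstrict : ∀ s t : ℝ, |t| < |s| → deriv (deriv f) s < deriv (deriv f) t)
    (hlim : Filter.Tendsto (deriv (deriv f)) (Filter.cocompact ℝ) (nhds 0))
    (η : ℝ) (hη : 2 / deriv (deriv f) 0 < η)
    (xη : ℝ) (hxη : 0 < xη) (heq : η * deriv f xη = 2 * xη)
    (huniq : ∀ y : ℝ, 0 < y → η * deriv f y = 2 * y → y = xη) :
    ∃ A : Set ℝ, A.Countable ∧ MeasureTheory.volume A = 0 ∧
      ∀ x₀ : ℝ, x₀ ∉ A → ∀ x : ℕ → ℝ, x 0 = x₀ →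
        (∀ t : ℕ, x (t + 1) = x t - η * deriv f (x t)) →
        Filter.Tendsto (fun t => |x t|) Filter.atTop (nhds xη) ∧
        Filter.Tendsto (fun t => x t + x (t + 1)) Filter.atTop (nhds 0) := by
  -- basic regularity facts
  have hD1 : ContDiff ℝ 1 (deriv f) := by
    have := (contDiff_succ_iff_deriv (n := 1)).mp (by norm_num at hf ⊢; exact hf)
    exact this.2.2
  have hDdiff : Differentiable ℝ (deriv f) := (contDiff_one_iff_deriv.mp hD1).1
  have hDcont : Continuous (deriv f) := hDdiff.continuous
  have hD2cont : Continuous (deriv (deriv f)) := (contDiff_one_iff_deriv.mp hD1).2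
  have hη0 : 0 < η := lt_trans (div_pos two_pos (hpos 0)) hη
  have hηD2 : 2 < η * deriv (deriv f) 0 := by
    rw [div_lt_iff₀ (hpos 0)] at hη; linarith
  -- f' is odd
  have hDodd : ∀ y : ℝ, deriv f (-y) = -deriv f y := by
    have key : ∀ y : ℝ, deriv f y = -deriv f (-y) := by
      intro y
      conv_lhs => rw [show f = fun z => f (-z) from funext heven]
      rw [deriv_comp_neg]
    intro y
    have := key (-y)
    rw [neg_neg] at this
    linarith
  have hD0 : deriv f 0 = 0 := by
    have := hDodd 0; rw [neg_zero] at this; linarith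
  have hDmono : StrictMono (deriv f) := strictMono_of_deriv_pos hpos
  -- phi u = η f'(u) - 2u : continuity and derivative
  have hphicont : Continuous (fun u : ℝ => η * deriv f u - 2 * u) :=
    (continuous_const.mul hDcont).sub (continuous_const.mul continuous_id)
  have hphideriv : ∀ u : ℝ,
      deriv (fun u => η * deriv f u - 2 * u) u = η * deriv (deriv f) u - 2 := by
    intro u
    rw [deriv_fun_sub ((hDdiff u).const_mul η) (differentiableAt_fun_id.const_mul 2), deriv_const_mul η (hDdiff u),
      deriv_const_mul 2 differentiable_id.differentiableAt]
    simp
  have hchicont : Continuous (fun u : ℝ => η * deriv f u - u) :=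
    (continuous_const.mul hDcont).sub continuous_id
  have hchideriv : ∀ u : ℝ,
      deriv (fun u => η * deriv f u - u) u = η * deriv (deriv f) u - 1 := by
    intro u
    rw [deriv_fun_sub ((hDdiff u).const_mul η) (differentiableAt_fun_id), deriv_const_mul η (hDdiff u)]
    simp
  -- positivity of phi near zero
  obtain ⟨ε, hε, hmono⟩ :
      ∃ ε > (0:ℝ), StrictMonoOn (fun u : ℝ => η * deriv f u - 2 * u) (Set.Icc 0 ε) := by
    have hopen : IsOpen {y : ℝ | 2 < η * deriv (deriv f) y} :=
      isOpen_lt continuous_const (continuous_const.mul hD2cont)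
    obtain ⟨ε, hε, hball⟩ := Metric.isOpen_iff.mp hopen 0 hηD2
    refine ⟨ε / 2, by linarith, ?_⟩
    apply strictMonoOn_of_deriv_pos (convex_Icc 0 (ε/2)) hphicont.continuousOn
    intro y hy
    rw [interior_Icc] at hy
    rw [hphideriv y]
    have hball' : y ∈ Metric.ball (0:ℝ) ε := by
      rw [Metric.mem_ball, Real.dist_eq, sub_zero, abs_of_pos hy.1]
      linarith [hy.2]
    have := hball hball'
    simp only [Set.mem_setOf_eq] at this
    linarith
  have hsmallpos : ∀ u : ℝ, 0 < u → u ≤ ε → 0 < η * deriv f u - 2 * u := by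
    intro u hu1 hu2
    have h := hmono (Set.left_mem_Icc.mpr (by linarith)) ⟨hu1.le, hu2⟩ hu1
    simpa [hD0] using h
  -- eventually η f'' < 1
  obtain ⟨M0, hM0⟩ : ∃ M : ℝ, ∀ u : ℝ, M ≤ u → deriv (deriv f) u < 1 / η := by
    have h1 : {y : ℝ | deriv (deriv f) y < 1 / η} ∈ Filter.cocompact ℝ :=
      hlim (Iio_mem_nhds (by positivity))
    obtain ⟨K, hK, hKs⟩ := Filter.hasBasis_cocompact.mem_iff.mp h1
    obtain ⟨r, hr⟩ := hK.isBounded.subset_closedBall 0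
    refine ⟨r + 1, fun u hu => ?_⟩
    have hnK : u ∉ K := by
      intro hmem
      have h2 := hr hmem
      rw [Metric.mem_closedBall, Real.dist_eq, sub_zero] at h2
      have := le_abs_self u
      linarith
    exact hKs hnK
  set M : ℝ := max M0 (xη + 1) with hMdef
  have hM : ∀ u : ℝ, M ≤ u → η * deriv (deriv f) u < 1 := by
    intro u hu
    have h := hM0 u (le_trans (le_max_left _ _) hu)
    calc η * deriv (deriv f) u < η * (1 / η) := by
          exact mul_lt_mul_of_pos_left h hη0
      _ = 1 := by field_simp
  have hMx : xη < M := lt_of_lt_of_le (by linarith) (le_max_right _ _)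
  have hM0' : (0:ℝ) ≤ M := le_of_lt (lt_trans hxη hMx)
  -- chi is strictly decreasing on [M, ∞)
  have hchianti : StrictAntiOn (fun u : ℝ => η * deriv f u - u) (Set.Ici M) := by
    apply strictAntiOn_of_deriv_neg (convex_Ici M) hchicont.continuousOn
    intro y hy
    rw [interior_Ici] at hy
    rw [hchideriv y]
    have := hM y hy.le
    linarith
  -- a point where phi < 0
  set u₀ : ℝ := max M (η * deriv f M - M) + 1 with hu₀def
  have hu₀M : M < u₀ := by
    have := le_max_left M (η * deriv f M - M); linarith
  have hu₀x : xη < u₀ := lt_trans hMx hu₀M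
  have hphiu₀ : η * deriv f u₀ - 2 * u₀ < 0 := by
    have h1 := hchianti (Set.mem_Ici.mpr le_rfl) (Set.mem_Ici.mpr hu₀M.le) hu₀M
    have h2 : η * deriv f M - M ≤ u₀ - 1 := by
      have := le_max_right M (η * deriv f M - M); linarith
    simp only at h1
    linarith
  -- sign of phi on (xη, ∞)
  have hphineg : ∀ u : ℝ, xη < u → η * deriv f u - 2 * u < 0 := by
    intro u hu
    rcases lt_trichotomy (η * deriv f u - 2 * u) 0 with h | h | h
    · exact h
    · exfalso
      have huu : u = xη := huniq u (lt_trans hxη hu) (by linarith)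
      rw [huu] at hu; exact lt_irrefl _ hu
    · exfalso
      rcases le_total u u₀ with hle | hle
      · have hIVT := intermediate_value_Icc' hle hphicont.continuousOn
        have h0mem : (0:ℝ) ∈ Set.Icc (η * deriv f u₀ - 2 * u₀) (η * deriv f u - 2 * u) :=
          ⟨hphiu₀.le, h.le⟩
        obtain ⟨y, hy, hy0⟩ := hIVT h0mem
        have hy0' : 0 < y := lt_trans hxη (lt_of_lt_of_le hu hy.1)
        have hyx : y = xη := huniq y hy0' (by simp only at hy0; linarith)
        rw [hyx] at hy
        linarith [hy.1]
      · have hIVT := intermediate_value_Icc hle hphicont.continuousOn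
        have h0mem : (0:ℝ) ∈ Set.Icc (η * deriv f u₀ - 2 * u₀) (η * deriv f u - 2 * u) :=
          ⟨hphiu₀.le, h.le⟩
        obtain ⟨y, hy, hy0⟩ := hIVT h0mem
        have hy0' : 0 < y := lt_trans hxη (lt_of_lt_of_le hu₀x hy.1)
        have hyx : y = xη := huniq y hy0' (by simp only at hy0; linarith)
        rw [hyx] at hy
        linarith [hy.1]
  -- sign of phi on (0, xη)
  have hphipos : ∀ u : ℝ, 0 < u → u < xη → 0 < η * deriv f u - 2 * u := by
    intro u hu0 hux
    rcases lt_trichotomy (η * deriv f u - 2 * u) 0 with h | h | h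
    · exfalso
      have hminpos : 0 < min ε u := lt_min hε hu0
      set p : ℝ := min ε u / 2 with hpdef
      have hp0 : 0 < p := by positivity
      have hpε : p ≤ ε := by
        have := min_le_left ε u; rw [hpdef]; linarith
      have hpu : p < u := by
        have := min_le_right ε u; rw [hpdef]; linarith
      have hpp := hsmallpos p hp0 hpε
      have hIVT := intermediate_value_Icc' hpu.le hphicont.continuousOn
      have h0mem : (0:ℝ) ∈ Set.Icc (η * deriv f u - 2 * u) (η * deriv f p - 2 * p) :=
        ⟨h.le, hpp.le⟩
      obtain ⟨y, hy, hy0⟩ := hIVT h0mem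
      have hyx : y = xη := huniq y (lt_of_lt_of_le hp0 hy.1) (by simp only at hy0; linarith)
      rw [hyx] at hy
      linarith [hy.2]
    · exfalso
      have huu : u = xη := huniq u hu0 (by linarith)
      rw [huu] at hux; exact lt_irrefl _ hux
    · exact h
  -- key contraction on (0, ∞)
  have hkeypos : ∀ u : ℝ, 0 < u → u ≠ xη →
      |(η * deriv f u - u) - xη| < |u - xη| := by
    intro u hu0 hune
    rcases lt_or_gt_of_ne hune with h | h
    · have h1 := hphipos u hu0 h
      have h2 : η * deriv f u < η * deriv f xη := mul_lt_mul_of_pos_left (hDmono h) hη0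
      rw [heq] at h2
      rw [abs_of_neg (by linarith : u - xη < 0), abs_lt]
      constructor <;> linarith
    · have h1 := hphineg u h
      have h2 : η * deriv f xη < η * deriv f u := mul_lt_mul_of_pos_left (hDmono h) hη0
      rw [heq] at h2
      rw [abs_of_pos (by linarith : (0:ℝ) < u - xη), abs_lt]
      constructor <;> linarith
  -- S is odd
  have hSodd : ∀ u : ℝ, η * deriv f (-u) - (-u) = -(η * deriv f u - u) := by
    intro u; rw [hDodd]; ring
  -- key contraction in absolute-value form
  have hkeyabs : ∀ u : ℝ, u ≠ 0 →
      |(|η * deriv f u - u|) - xη| ≤ |(|u|) - xη| ∧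
      (|u| ≠ xη → |(|η * deriv f u - u|) - xη| < |(|u|) - xη|) := by
    intro u hu
    have hw0 : 0 < |u| := abs_pos.mpr hu
    have hSabs : |η * deriv f u - u| = |η * deriv f (|u|) - (|u|)| := by
      rcases abs_cases u with ⟨h1, _⟩ | ⟨h1, _⟩
      · rw [h1]
      · rw [h1, hSodd, abs_neg]
    rcases eq_or_ne (|u|) xη with he | hne'
    · have hSxη : η * deriv f (|u|) - (|u|) = xη := by rw [he]; linarith
      rw [hSabs, hSxη, he]
      simp [abs_of_pos hxη]
    · have hstep1 : |(|η * deriv f (|u|) - (|u|)|) - xη| ≤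
          |(η * deriv f (|u|) - (|u|)) - xη| := by
        have h := abs_abs_sub_abs_le_abs_sub (η * deriv f (|u|) - (|u|)) xη
        rwa [abs_of_pos hxη] at h
      have hstrict' : |(|η * deriv f (|u|) - (|u|)|) - xη| < |(|u|) - xη| :=
        lt_of_le_of_lt hstep1 (hkeypos (|u|) hw0 hne')
      rw [hSabs]
      exact ⟨hstrict'.le, fun _ => hstrict'⟩
  -- countability of the bad set: the map G has at most 3 preimages of any point
  obtain ⟨b, hb, hb1⟩ : ∃ b ∈ Set.Icc (0:ℝ) M, η * deriv (deriv f) b = 1 := by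
    have hIVT := intermediate_value_Icc' hM0'
      ((continuous_const.mul hD2cont).continuousOn :
        ContinuousOn (fun y : ℝ => η * deriv (deriv f) y) (Set.Icc 0 M))
    have h1mem : (1:ℝ) ∈ Set.Icc (η * deriv (deriv f) M) (η * deriv (deriv f) 0) :=
      ⟨(hM M le_rfl).le, by linarith⟩
    obtain ⟨b, hbmem, hb1⟩ := hIVT h1mem
    exact ⟨b, hbmem, hb1⟩
  have hb0 : 0 < b := by
    rcases (lt_or_eq_of_le hb.1) with h | h
    · exact h
    · exfalso; rw [← h] at hb1; linarith
  have hGdiff : Differentiable ℝ (fun z : ℝ => z - η * deriv f z) :=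
    differentiable_id.sub (hDdiff.const_mul η)
  have hGderiv : ∀ z : ℝ,
      deriv (fun z : ℝ => z - η * deriv f z) z = 1 - η * deriv (deriv f) z := by
    intro z
    rw [deriv_fun_sub (differentiableAt_fun_id) ((hDdiff z).const_mul η), deriv_const_mul η (hDdiff z)]
    simp
  have hGmono1 : StrictMonoOn (fun z : ℝ => z - η * deriv f z) (Set.Ici b) := by
    apply strictMonoOn_of_deriv_pos (convex_Ici b) hGdiff.continuous.continuousOn
    intro z hz
    rw [interior_Ici] at hz
    rw [hGderiv z]
    have habs : |b| < |z| := by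
      rw [abs_of_pos hb0, abs_of_pos (lt_trans hb0 hz)]; exact hz
    have h2 := hstrict z b habs
    have h3 : η * deriv (deriv f) z < η * deriv (deriv f) b := mul_lt_mul_of_pos_left h2 hη0
    linarith
  have hGmono2 : StrictMonoOn (fun z : ℝ => z - η * deriv f z) (Set.Iic (-b)) := by
    apply strictMonoOn_of_deriv_pos (convex_Iic (-b)) hGdiff.continuous.continuousOn
    intro z hz
    rw [interior_Iic] at hz
    rw [Set.mem_Iio] at hz
    rw [hGderiv z]
    have hzneg : z < 0 := lt_trans hz (by linarith)
    have habs : |b| < |z| := by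
      rw [abs_of_pos hb0, abs_of_neg hzneg]; linarith
    have h2 := hstrict z b habs
    have h3 : η * deriv (deriv f) z < η * deriv (deriv f) b := mul_lt_mul_of_pos_left h2 hη0
    linarith
  have hGanti : StrictAntiOn (fun z : ℝ => z - η * deriv f z) (Set.Icc (-b) b) := by
    apply strictAntiOn_of_deriv_neg (convex_Icc (-b) b) hGdiff.continuous.continuousOn
    intro z hz
    rw [interior_Icc] at hz
    rw [hGderiv z]
    have habs : |z| < |b| := by
      rw [abs_of_pos hb0]; exact abs_lt.mpr ⟨hz.1, hz.2⟩
    have h2 := hstrict b z habs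
    have h3 : η * deriv (deriv f) b < η * deriv (deriv f) z := mul_lt_mul_of_pos_left h2 hη0
    linarith
  have hfiber : ∀ c : ℝ, ((fun z : ℝ => z - η * deriv f z) ⁻¹' {c}).Countable := by
    intro c
    set P : Set ℝ := (fun z : ℝ => z - η * deriv f z) ⁻¹' {c} with hPdef
    have hsub : P ⊆ (P ∩ Set.Iic (-b)) ∪ ((P ∩ Set.Icc (-b) b) ∪ (P ∩ Set.Ici b)) := by
      intro z hz
      rcases le_total z (-b) with h | h
      · exact Or.inl ⟨hz, h⟩
      · rcases le_total z b with h' | h'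
        · exact Or.inr (Or.inl ⟨hz, h, h'⟩)
        · exact Or.inr (Or.inr ⟨hz, h'⟩)
    have hc1 : (P ∩ Set.Iic (-b)).Subsingleton := by
      intro z1 hz1 z2 hz2
      apply hGmono2.injOn hz1.2 hz2.2
      have e1 : z1 - η * deriv f z1 = c := hz1.1
      have e2 : z2 - η * deriv f z2 = c := hz2.1
      simp only [e1, e2]
    have hc2 : (P ∩ Set.Icc (-b) b).Subsingleton := by
      intro z1 hz1 z2 hz2
      apply hGanti.injOn hz1.2 hz2.2
      have e1 : z1 - η * deriv f z1 = c := hz1.1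
      have e2 : z2 - η * deriv f z2 = c := hz2.1
      simp only [e1, e2]
    have hc3 : (P ∩ Set.Ici b).Subsingleton := by
      intro z1 hz1 z2 hz2
      apply hGmono1.injOn hz1.2 hz2.2
      have e1 : z1 - η * deriv f z1 = c := hz1.1
      have e2 : z2 - η * deriv f z2 = c := hz2.1
      simp only [e1, e2]
    exact Set.Countable.mono hsub
      ((hc1.countable).union ((hc2.countable).union (hc3.countable)))
  have hAc : (⋃ t : ℕ, (fun z : ℝ => z - η * deriv f z)^[t] ⁻¹' {0}).Countable := by
    apply Set.countable_iUnion
    intro t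
    induction t with
    | zero => simpa using Set.countable_singleton (0:ℝ)
    | succ n ih =>
      rw [Function.iterate_succ, Set.preimage_comp, ← Set.biUnion_preimage_singleton]
      exact Set.Countable.biUnion ih fun c _ => hfiber c
  refine ⟨_, hAc, hAc.measure_zero _, ?_⟩
  intro x₀ hx₀ x hx0 hxrec
  have hGx : ∀ t : ℕ, x t = (fun z : ℝ => z - η * deriv f z)^[t] x₀ := by
    intro t
    induction t with
    | zero => simpa using hx0
    | succ n ih => rw [Function.iterate_succ_apply', ← ih, hxrec n]
  have hne : ∀ t : ℕ, x t ≠ 0 := by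
    intro t ht
    apply hx₀
    apply Set.mem_iUnion.mpr
    refine ⟨t, ?_⟩
    simp only [Set.mem_preimage, Set.mem_singleton_iff]
    rw [← hGx t]; exact ht
  have hrecS : ∀ t : ℕ, x (t + 1) = -(η * deriv f (x t) - x t) := by
    intro t; rw [hxrec t]; ring
  have part1 := gd_aux (fun u : ℝ => η * deriv f u - u) hchicont xη hxη hkeyabs x hrecS hne
  refine ⟨part1, ?_⟩
  have hphixη : η * deriv f xη - 2 * xη = 0 := by linarith
  have hlim2 : Tendsto (fun t => η * deriv f (|x t|) - 2 * (|x t|)) atTop (nhds 0) := by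
    have h := (hphicont.tendsto xη).comp part1
    rw [hphixη] at h
    simpa [Function.comp_def] using h
  have habs2 : ∀ t : ℕ, |x t + x (t + 1)| = |η * deriv f (|x t|) - 2 * (|x t|)| := by
    intro t
    rw [hxrec t]
    have h1 : x t + (x t - η * deriv f (x t)) = -(η * deriv f (x t) - 2 * (x t)) := by ring
    rw [h1, abs_neg]
    rcases abs_cases (x t) with ⟨h2, _⟩ | ⟨h2, _⟩
    · rw [h2]
    · rw [h2]
      have h3 : η * deriv f (-(x t)) - 2 * (-(x t)) = -(η * deriv f (x t) - 2 * (x t)) := by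
        rw [hDodd]; ring
      rw [h3, abs_neg]
  have heqf : (fun t => |x t + x (t + 1)|) = fun t => |η * deriv f (|x t|) - 2 * (|x t|)| :=
    funext habs2
  have habs3 : Tendsto (fun t => |x t + x (t + 1)|) atTop (nhds 0) := by
    rw [heqf]; simpa using hlim2.abs
  exact (tendsto_zero_iff_abs_tendsto_zero _).mpr habs3
end

section
/- Let {p₁, …, p_n} be an orthonormal basis of ℝⁿ and let each f_i : ℝ → ℝ be twice continuously differentiable, even, with f_i(0) = 0, f_i''(x) > 0, f_i''(s) < f_i''(t) whenever |t| < |s|, and f_i''(x) → 0 as |x| → ∞. Define f(x) = Σ_{i=1}^n f_i(p_iᵀ x), fix η > 0, and let x₀, x₁, … be the gradient descent trajectory x_{t+1} = x_t − η ∇f(x_t). Then, except for a Lebesgue-null set of initializations x₀ ∈ ℝⁿ, for each i the component z_t^{(i)} = p_iᵀ x_t converges to 0 if η ≤ 2/f_i''(0), and otherwise converges to the 2-periodic solution {± x_η^{(i)}} (i.e. |z_t^{(i)}| → x_η^{(i)} and z_t^{(i)} + z_{t+1}^{(i)} → 0), where x_η^{(i)} > 0 is the unique positive solution of η f_i'(x_η^{(i)})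 = 2 x_η^{(i)}. -/
open scoped RealInnerProductSpace
open Filter Set


namespace EoS

/-- Basic regularity from `ContDiff ℝ 2`. -/
lemma basics {g : ℝ → ℝ} (hg : ContDiff ℝ 2 g) :
    Differentiable ℝ g ∧ Differentiable ℝ (deriv g) ∧ Continuous (deriv (deriv g)) := by
  rw [show (2 : WithTop ℕ∞) = 1 + 1 from rfl, contDiff_succ_iff_deriv] at hg
  obtain ⟨h1, -, h2⟩ := hg
  rw [contDiff_one_iff_deriv] at h2
  exact ⟨h1, h2.1, h2.2⟩

/-- The derivative of an even function is odd. -/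
lemma deriv_odd {g : ℝ → ℝ} (he : ∀ x, g x = g (-x)) :
    ∀ x, deriv g (-x) = - deriv g x := by
  have key : ∀ x, deriv g x = - deriv g (-x) := by
    intro x
    have : deriv g x = deriv (fun y => g (-y)) x := by
      apply Filter.EventuallyEq.deriv_eq
      filter_upwards with y using he y
    rw [this, deriv_comp_neg]
  intro x
  rw [key (-x), neg_neg]

/-- deriv g 0 = 0 for even g. -/
lemma deriv_zero_of_even {g : ℝ → ℝ} (he : ∀ x, g x = g (-x)) : deriv g 0 = 0 := by
  have := deriv_odd he 0
  rw [neg_zero] at this; linarith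

/-- g' is strictly monotone when g'' > 0. -/
lemma strictMono_deriv {g : ℝ → ℝ} (hg : ContDiff ℝ 2 g)
    (hpos : ∀ x, 0 < deriv (deriv g) x) : StrictMono (deriv g) :=
  strictMono_of_deriv_pos (f := deriv g) hpos

/-- MVT form: for z > 0 there is ζ ∈ (0,z) with g' z = g'' ζ * z. -/
lemma mvt_ratio {g : ℝ → ℝ} (hg : ContDiff ℝ 2 g) (he : ∀ x, g x = g (-x)) (z : ℝ)
    (hz : 0 < z) : ∃ ζ, 0 < ζ ∧ ζ < z ∧ deriv g z = deriv (deriv g) ζ * z := by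
  obtain ⟨hd, hd1, hc2⟩ := basics hg
  obtain ⟨ζ, hζ, hζeq⟩ := exists_deriv_eq_slope (deriv g) hz
    (hd1.continuous.continuousOn) (hd1.differentiableOn)
  refine ⟨ζ, hζ.1, hζ.2, ?_⟩
  rw [deriv_zero_of_even he, sub_zero, sub_zero, eq_div_iff (ne_of_gt hz)] at hζeq
  linarith [hζeq]

/-- strict antitonicity of g'(u)/u : for 0 < a < b, g'(b) * a < g'(a) * b. -/
lemma ratio_strictAnti {g : ℝ → ℝ} (hg : ContDiff ℝ 2 g) (he : ∀ x, g x = g (-x))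
    (hstr : ∀ s t : ℝ, |t| < |s| → deriv (deriv g) s < deriv (deriv g) t)
    {a b : ℝ} (ha : 0 < a) (hab : a < b) :
    deriv g b * a < deriv g a * b := by
  obtain ⟨hd, hd1, hc2⟩ := basics hg
  obtain ⟨ζ, hζ0, hζa, hζeq⟩ := mvt_ratio hg he a ha
  obtain ⟨ξ, hξ, hξeq⟩ := exists_deriv_eq_slope (deriv g) hab
    (hd1.continuous.continuousOn) (hd1.differentiableOn)
  have hξζ : deriv (deriv g) ξ < deriv (deriv g) ζ := by
    apply hstr
    rw [abs_of_pos hζ0, abs_of_pos (lt_trans ha hξ.1)]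
    exact lt_trans hζa hξ.1
  have hb : deriv g b = deriv g a + deriv (deriv g) ξ * (b - a) := by
    rw [eq_div_iff (by linarith : b - a ≠ 0)] at hξeq; linarith
  have h1 : deriv (deriv g) ξ * (b - a) * a < deriv (deriv g) ζ * (b - a) * a := by
    have : (0:ℝ) < (b - a) * a := mul_pos (by linarith) ha
    nlinarith
  have h2 : deriv (deriv g) ζ * (b - a) * a = deriv g a * (b - a) := by
    rw [hζeq]; ring
  nlinarith [hb]

end EoS

namespace Part2
open EoS
variable {g : ℝ → ℝ} {η : ℝ}

/-- oddness of the step map -/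
lemma step_neg (he : ∀ x, g x = g (-x)) (z : ℝ) :
    (-z) - η * deriv g (-z) = -(z - η * deriv g z) := by
  rw [deriv_odd he]; ring

/-- Case A: strict contraction of |·| off 0. -/
lemma stepA_lt (hg : ContDiff ℝ 2 g) (he : ∀ x, g x = g (-x))
    (hpos : ∀ x, 0 < deriv (deriv g) x)
    (hstr : ∀ s t : ℝ, |t| < |s| → deriv (deriv g) s < deriv (deriv g) t)
    (hη : 0 < η) (hA : η * deriv (deriv g) 0 ≤ 2) :
    ∀ z : ℝ, z ≠ 0 → |z - η * deriv g z| < |z| := by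
  have key : ∀ z : ℝ, 0 < z → |z - η * deriv g z| < |z| := by
    intro z hz
    obtain ⟨ζ, hζ0, hζz, hζeq⟩ := mvt_ratio hg he z hz
    have h2 : deriv (deriv g) ζ < deriv (deriv g) 0 := by
      apply hstr; rw [abs_zero, abs_of_pos hζ0]; exact hζ0
    have hub : η * deriv g z < 2 * z := by
      have hs : η * deriv (deriv g) ζ < 2 := by nlinarith [mul_pos hη (sub_pos.mpr h2)]
      rw [hζeq]
      calc η * (deriv (deriv g) ζ * z) = (η * deriv (deriv g) ζ) * z := by ring
        _ < 2 * z := by exact mul_lt_mul_of_pos_right hs hz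
    have hlb : 0 < η * deriv g z := by
      have := strictMono_deriv hg hpos hz
      rw [deriv_zero_of_even he] at this
      positivity
    rw [abs_of_pos hz, abs_lt]; constructor <;> linarith
  intro z hz
  rcases lt_trichotomy z 0 with h | h | h
  · have := key (-z) (by linarith)
    rw [step_neg he, abs_neg, abs_neg] at this
    exact this
  · exact absurd h hz
  · exact key z h

/-- Case A: convergence to 0 from any initialization. -/
lemma convA (hg : ContDiff ℝ 2 g) (he : ∀ x, g x = g (-x))
    (hpos : ∀ x, 0 < deriv (deriv g) x)
    (hstr : ∀ s t : ℝ, |t| < |s| → deriv (deriv g) s < deriv (deriv g) t)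
    (hη : 0 < η) (hA : η * deriv (deriv g) 0 ≤ 2)
    (z : ℕ → ℝ) (hrec : ∀ t, z (t + 1) = z t - η * deriv g (z t)) :
    Filter.Tendsto z Filter.atTop (nhds 0) := by
  obtain ⟨hd, hd1, hc2⟩ := basics hg
  have hstep_le : ∀ w : ℝ, |w - η * deriv g w| ≤ |w| := by
    intro w
    rcases eq_or_ne w 0 with h | h
    · simp [h, deriv_zero_of_even he]
    · exact (stepA_lt hg he hpos hstr hη hA w h).le
  set u : ℕ → ℝ := fun t => |z t| with hu
  have hanti : Antitone u := by
    apply antitone_nat_of_succ_le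
    intro t
    simp only [hu]
    rw [hrec t]
    exact hstep_le (z t)
  have hbdd : BddBelow (Set.range u) := ⟨0, by rintro y ⟨t, rfl⟩; positivity⟩
  have htend : Filter.Tendsto u Filter.atTop (nhds (⨅ t, u t)) :=
    tendsto_atTop_ciInf hanti hbdd
  set δ := ⨅ t, u t with hδ
  have hδ0 : 0 ≤ δ := le_ciInf fun t => abs_nonneg _
  have hδeq : δ = 0 := by
    by_contra hne
    have hδpos : 0 < δ := lt_of_le_of_ne hδ0 (Ne.symm hne)
    -- subsequence
    have hball : ∀ t, z t ∈ Set.Icc (-(u 0)) (u 0) := by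
      intro t
      have : u t ≤ u 0 := hanti (Nat.zero_le t)
      simp only [hu] at this ⊢
      rw [Set.mem_Icc]
      constructor <;> [linarith [neg_abs_le (z t)]; linarith [le_abs_self (z t)]]
    obtain ⟨a, -, φ, hφ, hφtend⟩ := tendsto_subseq_of_bounded
      (Metric.isBounded_Icc (-(u 0)) (u 0)) hball
    have h1 : Filter.Tendsto (fun k => u (φ k)) Filter.atTop (nhds |a|) :=
      (continuous_abs.tendsto a).comp hφtend
    have h2 : Filter.Tendsto (fun k => u (φ k)) Filter.atTop (nhds δ) :=
      htend.comp (hφ.tendsto_atTop)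
    have haδ : |a| = δ := tendsto_nhds_unique h1 h2
    have hzφ1 : Filter.Tendsto (fun k => z (φ k + 1)) Filter.atTop
        (nhds (a - η * deriv g a)) := by
      have : Filter.Tendsto (fun k => z (φ k) - η * deriv g (z (φ k))) Filter.atTop
          (nhds (a - η * deriv g a)) :=
        hφtend.sub (((hd1.continuous.tendsto a).comp hφtend).const_mul η)
      simpa only [← hrec] using this
    have h3 : Filter.Tendsto (fun k => u (φ k + 1)) Filter.atTop
        (nhds |a - η * deriv g a|) := (continuous_abs.tendsto _).comp hzφ1
    have h4 : Filter.Tendsto (fun k => u (φ k + 1)) Filter.atTop (nhds δ) :=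
      htend.comp ((tendsto_add_atTop_nat 1).comp hφ.tendsto_atTop)
    have heq2 : |a - η * deriv g a| = δ := tendsto_nhds_unique h3 h4
    have hane : a ≠ 0 := by intro h; rw [h, abs_zero] at haδ; linarith
    have := stepA_lt hg he hpos hstr hη hA a hane
    rw [heq2, haδ] at this
    exact lt_irrefl _ this
  rw [hδeq] at htend
  have : Filter.Tendsto (fun t => |z t|) Filter.atTop (nhds 0) := htend
  exact (tendsto_zero_iff_abs_tendsto_zero z).mpr this

end Part2

namespace Part3
open EoS Part2
variable {g : ℝ → ℝ} {η : ℝ}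

/-- From the cocompact limit: far out, `η g'' < 1`. -/
lemma far_small (hlim : Filter.Tendsto (deriv (deriv g)) (Filter.cocompact ℝ) (nhds 0))
    (hη : 0 < η) :
    ∃ R : ℝ, 0 < R ∧ ∀ x : ℝ, R ≤ |x| → η * deriv (deriv g) x < 1 := by
  have h1 : ∀ᶠ x in Filter.cocompact ℝ, |deriv (deriv g) x| < 1 / η := by
    have := Metric.tendsto_nhds.mp hlim (1 / η) (by positivity)
    simpa [Real.dist_eq] using this
  rw [Filter.hasBasis_cocompact.eventually_iff] at h1
  obtain ⟨K, hK, hKs⟩ := h1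
  obtain ⟨r, hr⟩ := hK.isBounded.subset_closedBall 0
  refine ⟨max r 1 + 1, by positivity, fun x hx => ?_⟩
  have hxK : x ∉ K := by
    intro hmem
    have := hr hmem
    rw [Metric.mem_closedBall, Real.dist_eq, sub_zero] at this
    have h2 : r ≤ max r 1 := le_max_left _ _
    linarith [hx]
  have := hKs hxK
  have habs : deriv (deriv g) x < 1 / η := lt_of_abs_lt this
  calc η * deriv (deriv g) x < η * (1 / η) := by exact mul_lt_mul_of_pos_left habs hη
    _ = 1 := by field_simp

/-- Case B: existence and uniqueness of the positive solution of η g'(x) = 2x. -/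
lemma exB (hg : ContDiff ℝ 2 g) (he : ∀ x, g x = g (-x))
    (hpos : ∀ x, 0 < deriv (deriv g) x)
    (hstr : ∀ s t : ℝ, |t| < |s| → deriv (deriv g) s < deriv (deriv g) t)
    (hlim : Filter.Tendsto (deriv (deriv g)) (Filter.cocompact ℝ) (nhds 0))
    (hη : 0 < η) (hB : 2 < η * deriv (deriv g) 0) :
    ∃ xe : ℝ, 0 < xe ∧ η * deriv g xe = 2 * xe ∧
      ∀ y : ℝ, 0 < y → η * deriv g y = 2 * y → y = xe := by
  obtain ⟨hd, hd1, hc2⟩ := basics hg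
  obtain ⟨R, hR, hRs⟩ := far_small hlim hη
  -- upper end: h u₁ < 0
  have hfar : ∀ u : ℝ, R ≤ u → η * deriv g u ≤ η * deriv g R + (u - R) := by
    intro u hu
    rcases eq_or_lt_of_le hu with h | h
    · rw [← h]; linarith
    · obtain ⟨ξ, hξ, hξeq⟩ := exists_deriv_eq_slope (deriv g) h
        (hd1.continuous.continuousOn) (hd1.differentiableOn)
      rw [eq_div_iff (by linarith : u - R ≠ 0)] at hξeq
      have hsm : η * deriv (deriv g) ξ < 1 := by
        apply hRs; rw [abs_of_pos (lt_trans hR hξ.1)]; exact hξ.1.le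
      nlinarith [hξ.1, mul_pos hη (hpos ξ)]
  set u₁ : ℝ := R + η * deriv g R + 1 with hu₁
  have hgR : 0 < deriv g R := by
    have := strictMono_deriv hg hpos hR
    rwa [deriv_zero_of_even he] at this
  have hu₁R : R ≤ u₁ := by nlinarith
  have hval₁ : η * deriv g u₁ - 2 * u₁ < 0 := by
    have := hfar u₁ hu₁R
    nlinarith
  -- lower end : find small u₀ with η g'(u₀) > 2 u₀
  have hcnt : ContinuousAt (fun y => η * deriv (deriv g) y) 0 :=
    continuousAt_const.mul hc2.continuousAt
  have hnb : {y : ℝ | 2 < η * deriv (deriv g) y} ∈ nhds (0:ℝ) := by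
    have := hcnt (Ioi_mem_nhds hB)
    simpa [Set.preimage] using this
  obtain ⟨ε, hε, hball⟩ := Metric.mem_nhds_iff.mp hnb
  set u₀ : ℝ := min (ε / 2) (u₁ / 2) with hu₀def
  have hu₀pos : 0 < u₀ := by
    apply lt_min (by positivity)
    have : 0 < u₁ := by nlinarith
    positivity
  have hu₀lt : u₀ < u₁ := by
    have h1 : u₀ ≤ u₁ / 2 := min_le_right _ _
    have : 0 < u₁ := by nlinarith
    linarith
  have hval₀ : 0 < η * deriv g u₀ - 2 * u₀ := by
    obtain ⟨ζ, hζ0, hζu, hζeq⟩ := mvt_ratio hg he u₀ hu₀pos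
    have hζball : ζ ∈ Metric.ball (0:ℝ) ε := by
      rw [Metric.mem_ball, Real.dist_eq, sub_zero, abs_of_pos hζ0]
      have : u₀ ≤ ε / 2 := min_le_left _ _
      linarith
    have h2 : 2 < η * deriv (deriv g) ζ := hball hζball
    rw [hζeq]; nlinarith
  -- IVT
  have hcont : ContinuousOn (fun u => η * deriv g u - 2 * u) (Set.Icc u₀ u₁) :=
    ((continuous_const.mul hd1.continuous).sub (continuous_const.mul continuous_id)).continuousOn
  have hivt := intermediate_value_Icc' hu₀lt.le hcont
  have hmem : (0:ℝ) ∈ Set.Icc (η * deriv g u₁ - 2 * u₁) (η * deriv g u₀ - 2 * u₀) :=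
    ⟨hval₁.le, hval₀.le⟩
  obtain ⟨xe, hxe, hxeq⟩ := hivt hmem
  have hxepos : 0 < xe := lt_of_lt_of_le hu₀pos hxe.1
  have hxeq' : η * deriv g xe - 2 * xe = 0 := hxeq
  have heq : η * deriv g xe = 2 * xe := by linarith
  refine ⟨xe, hxepos, heq, fun y hy hyeq => ?_⟩
  rcases lt_trichotomy y xe with h | h | h
  · exfalso
    have := ratio_strictAnti hg he hstr hy h
    nlinarith
  · exact h
  · exfalso
    have := ratio_strictAnti hg he hstr hxepos h
    nlinarith

end Part3

namespace Part4
open EoS Part2 Part3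
variable {g : ℝ → ℝ} {η : ℝ}

/-- Key contraction toward xe, for positive arguments. -/
lemma star_pos (hg : ContDiff ℝ 2 g) (he : ∀ x, g x = g (-x))
    (hpos : ∀ x, 0 < deriv (deriv g) x)
    (hstr : ∀ s t : ℝ, |t| < |s| → deriv (deriv g) s < deriv (deriv g) t)
    (hη : 0 < η) {xe : ℝ} (hxe : 0 < xe) (heq : η * deriv g xe = 2 * xe) :
    ∀ u : ℝ, 0 < u → u ≠ xe → |(|u - η * deriv g u|) - xe| < |u - xe| := by
  intro u hu hne
  have hmono := strictMono_deriv hg hpos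
  rcases lt_or_gt_of_ne hne with h | h
  · -- u < xe
    have hr := ratio_strictAnti hg he hstr hu h
    have hlb : 2 * u < η * deriv g u := by nlinarith
    have hub : η * deriv g u < 2 * xe := by
      have := hmono h
      nlinarith
    have hsneg : u - η * deriv g u < 0 := by linarith
    rw [abs_of_neg hsneg, abs_of_neg (by linarith : u - xe < 0)]
    rw [abs_lt]
    constructor <;> nlinarith
  · -- xe < u
    have hr := ratio_strictAnti hg he hstr hxe h
    have hub : η * deriv g u < 2 * u := by nlinarith
    have hlb : 2 * xe < η * deriv g u := by
      have := hmono h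
      nlinarith
    rw [abs_of_pos (by linarith : (0:ℝ) < u - xe), abs_lt]
    constructor
    · -- -(u - xe) < |s| - xe  i.e.  |s| > 2 xe - u
      rcases le_or_gt (u - η * deriv g u) 0 with hs | hs
      · rw [abs_of_nonpos hs]
        -- |s| = η g' u - u > 2xe - u since η g' u > 2 xe
        nlinarith
      · rw [abs_of_pos hs]
        -- s > 0 ; need u - ηg'u - xe > -(u - xe) ⇔ 2u - ηg'u > 2 xe
        -- s > 0 means η g' u < u; also need u > 2 xe.
        -- from ratio at (xe, 2xe)? show u > 2 xe:
        have h2xe : η * deriv g (2 * xe) > 2 * xe := by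
          have := hmono (show xe < 2 * xe by linarith)
          nlinarith
        have hugt : 2 * xe < u := by
          by_contra hcon
          push_neg at hcon
          rcases eq_or_lt_of_le hcon with hh | hh
          · rw [hh] at hs; nlinarith
          · -- u < 2xe : ratio anti on (u, 2xe): ηg'(2xe) * u < ηg'(u) * (2xe)
            have := ratio_strictAnti hg he hstr hu hh
            nlinarith
        nlinarith
    · -- |s| - xe < u - xe i.e. |s| < u
      have habs : |u - η * deriv g u| < u := by
        rw [abs_lt]; constructor <;> nlinarith
      linarith

/-- weak version at arbitrary nonzero z, via oddness. -/
lemma star_weak (hg : ContDiff ℝ 2 g) (he : ∀ x, g x = g (-x))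
    (hpos : ∀ x, 0 < deriv (deriv g) x)
    (hstr : ∀ s t : ℝ, |t| < |s| → deriv (deriv g) s < deriv (deriv g) t)
    (hη : 0 < η) {xe : ℝ} (hxe : 0 < xe) (heq : η * deriv g xe = 2 * xe) :
    ∀ z : ℝ, z ≠ 0 → |(|z - η * deriv g z|) - xe| ≤ |(|z|) - xe| := by
  have key : ∀ u : ℝ, 0 < u → |(|u - η * deriv g u|) - xe| ≤ |u - xe| := by
    intro u hu
    rcases eq_or_ne u xe with h | h
    · subst h
      have : u - η * deriv g u = -u := by linarith
      rw [this, abs_neg, abs_of_pos hu]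
    · exact (star_pos hg he hpos hstr hη hxe heq u hu h).le
  intro z hz
  rcases lt_or_gt_of_ne hz with h | h
  · have := key (-z) (by linarith)
    rw [step_neg he, abs_neg] at this
    rwa [abs_of_neg h]
  · have := key z h
    rwa [abs_of_pos h]

end Part4

namespace Part5
open EoS Part2 Part3 Part4
variable {g : ℝ → ℝ} {η : ℝ}

/-- Case B: convergence of |z_t| to xe and z_t + z_{t+1} to 0, provided the orbit avoids 0. -/
lemma convB (hg : ContDiff ℝ 2 g) (he : ∀ x, g x = g (-x))
    (hpos : ∀ x, 0 < deriv (deriv g) x)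
    (hstr : ∀ s t : ℝ, |t| < |s| → deriv (deriv g) s < deriv (deriv g) t)
    (hη : 0 < η) {xe : ℝ} (hxe : 0 < xe) (heq : η * deriv g xe = 2 * xe)
    (z : ℕ → ℝ) (hrec : ∀ t, z (t + 1) = z t - η * deriv g (z t))
    (hnz : ∀ t, z t ≠ 0) :
    Filter.Tendsto (fun t => |z t|) Filter.atTop (nhds xe) ∧
      Filter.Tendsto (fun t => z t + z (t + 1)) Filter.atTop (nhds 0) := by
  obtain ⟨hd, hd1, hc2⟩ := basics hg
  set d : ℕ → ℝ := fun t => |(|z t|) - xe| with hd_def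
  have hanti : Antitone d := by
    apply antitone_nat_of_succ_le
    intro t
    simp only [hd_def]
    rw [hrec t]
    exact star_weak hg he hpos hstr hη hxe heq (z t) (hnz t)
  have hbdd : BddBelow (Set.range d) := ⟨0, by rintro y ⟨t, rfl⟩; positivity⟩
  have htend : Filter.Tendsto d Filter.atTop (nhds (⨅ t, d t)) :=
    tendsto_atTop_ciInf hanti hbdd
  set δ := ⨅ t, d t with hδ
  have hδ0 : 0 ≤ δ := le_ciInf fun t => abs_nonneg _
  have hδle : ∀ t, δ ≤ d t := fun t => ciInf_le hbdd t
  have hδeq : δ = 0 := by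
    by_contra hne
    have hδpos : 0 < δ := lt_of_le_of_ne hδ0 (Ne.symm hne)
    have hub : ∀ t, |z t| ≤ xe + d 0 := by
      intro t
      have h1 : d t ≤ d 0 := hanti (Nat.zero_le t)
      have h2 : |z t| - xe ≤ d t := le_abs_self _
      linarith
    have hball : ∀ t, z t ∈ Set.Icc (-(xe + d 0)) (xe + d 0) := by
      intro t
      rw [Set.mem_Icc]
      constructor <;> [linarith [neg_abs_le (z t), hub t]; linarith [le_abs_self (z t), hub t]]
    obtain ⟨a, -, φ, hφ, hφtend⟩ := tendsto_subseq_of_bounded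
      (Metric.isBounded_Icc (-(xe + d 0)) (xe + d 0)) hball
    have h1 : Filter.Tendsto (fun k => d (φ k)) Filter.atTop (nhds (|(|a|) - xe|)) := by
      apply Filter.Tendsto.abs
      exact (hφtend.abs).sub_const xe
    have h2 : Filter.Tendsto (fun k => d (φ k)) Filter.atTop (nhds δ) :=
      htend.comp hφ.tendsto_atTop
    have haδ : |(|a|) - xe| = δ := tendsto_nhds_unique h1 h2
    have hzφ1 : Filter.Tendsto (fun k => z (φ k + 1)) Filter.atTop
        (nhds (a - η * deriv g a)) := by
      have : Filter.Tendsto (fun k => z (φ k) - η * deriv g (z (φ k))) Filter.atTop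
          (nhds (a - η * deriv g a)) :=
        hφtend.sub (((hd1.continuous.tendsto a).comp hφtend).const_mul η)
      simpa only [← hrec] using this
    have h3 : Filter.Tendsto (fun k => d (φ k + 1)) Filter.atTop
        (nhds (|(|a - η * deriv g a|) - xe|)) := by
      apply Filter.Tendsto.abs
      exact (hzφ1.abs).sub_const xe
    have h4 : Filter.Tendsto (fun k => d (φ k + 1)) Filter.atTop (nhds δ) :=
      htend.comp ((tendsto_add_atTop_nat 1).comp hφ.tendsto_atTop)
    have heq2 : |(|a - η * deriv g a|) - xe| = δ := tendsto_nhds_unique h3 h4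
    have ha0 : a = 0 := by
      by_contra hane
      have habs : |a| ≠ xe := by
        intro hc
        rw [hc, sub_self, abs_zero] at haδ
        linarith
      -- strict star at a
      have hstar : |(|a - η * deriv g a|) - xe| < |(|a|) - xe| := by
        rcases lt_or_gt_of_ne hane with h | h
        · have := star_pos hg he hpos hstr hη hxe heq (-a) (by linarith)
            (by rw [abs_of_neg h] at habs; exact fun hc => habs (by rw [hc]))
          rw [step_neg he, abs_neg] at this
          rwa [abs_of_neg h]
        · have := star_pos hg he hpos hstr hη hxe heq a h
            (by rw [abs_of_pos h] at habs; exact fun hc => habs (by rw [hc]))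
          rwa [abs_of_pos h]
      rw [haδ, heq2] at hstar
      exact lt_irrefl _ hstar
    rw [ha0, abs_zero, zero_sub, abs_neg, abs_of_pos hxe] at haδ
    -- δ = xe, so d t ≥ xe for all t, so |z t| ≥ 2 xe for all t (as z t ≠ 0... )
    -- but z (φ k) → 0, contradiction
    have hlow : ∀ t, 2 * xe ≤ |z t| ∨ |z t| ≤ 0 := by
      intro t
      have h5 : xe ≤ d t := by rw [haδ]; exact hδle t
      rcases abs_cases ((|z t|) - xe) with ⟨hh, -⟩ | ⟨hh, -⟩
      · left; simp only [hd_def] at h5; rw [hh] at h5; linarith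
      · right; simp only [hd_def] at h5; rw [hh] at h5; linarith
    have hlow2 : ∀ t, 2 * xe ≤ |z t| := by
      intro t
      rcases hlow t with h | h
      · exact h
      · exfalso; exact hnz t (abs_eq_zero.mp (le_antisymm h (abs_nonneg _)))
    have : Filter.Tendsto (fun k => |z (φ k)|) Filter.atTop (nhds 0) := by
      rw [← abs_zero, ← ha0]
      exact hφtend.abs
    have hev := this.eventually (eventually_lt_nhds (show (0:ℝ) < 2 * xe by linarith))
    obtain ⟨k, hk⟩ := hev.exists
    exact absurd (hlow2 (φ k)) (not_le.mpr hk)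
  -- now d → 0 hence |z| → xe
  rw [hδeq] at htend
  have habs : Filter.Tendsto (fun t => |z t|) Filter.atTop (nhds xe) := by
    rw [tendsto_iff_dist_tendsto_zero]
    simpa only [Real.dist_eq] using htend
  refine ⟨habs, ?_⟩
  -- second claim
  have hodd : ∀ w : ℝ, |2 * w - η * deriv g w| = |2 * |w| - η * deriv g (|w|)| := by
    intro w
    rcases le_or_gt 0 w with h | h
    · rw [abs_of_nonneg h]
    · rw [abs_of_neg h, deriv_odd he, show 2 * -w - η * -deriv g w = -(2 * w - η * deriv g w) by ring, abs_neg]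
  have hQ : Filter.Tendsto (fun t => |2 * |z t| - η * deriv g (|z t|)|) Filter.atTop (nhds 0) := by
    have hc : Filter.Tendsto (fun t => 2 * |z t| - η * deriv g (|z t|)) Filter.atTop
        (nhds (2 * xe - η * deriv g xe)) :=
      (habs.const_mul 2).sub (((hd1.continuous.tendsto xe).comp habs).const_mul η)
    rw [show 2 * xe - η * deriv g xe = 0 by linarith] at hc
    simpa using hc.abs
  have hfin : Filter.Tendsto (fun t => |z t + z (t + 1)|) Filter.atTop (nhds 0) := by
    have : (fun t => |z t + z (t + 1)|) = fun t => |2 * |z t| - η * deriv g (|z t|)| := by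
      funext t
      rw [hrec t, show z t + (z t - η * deriv g (z t)) = 2 * z t - η * deriv g (z t) by ring,
        hodd (z t)]
    rw [this]; exact hQ
  exact (tendsto_zero_iff_abs_tendsto_zero _).mpr hfin

end Part5

namespace Part6
open EoS Part2 Part3
variable {g : ℝ → ℝ} {η : ℝ}

/-- In case B each fiber of the step map is countable. -/
lemma fiber_countable (hg : ContDiff ℝ 2 g)
    (hstr : ∀ s t : ℝ, |t| < |s| → deriv (deriv g) s < deriv (deriv g) t)
    (hlim : Filter.Tendsto (deriv (deriv g)) (Filter.cocompact ℝ) (nhds 0))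
    (hη : 0 < η) (hB : 2 < η * deriv (deriv g) 0) :
    ∀ w : ℝ, {v : ℝ | v - η * deriv g v = w}.Countable := by
  obtain ⟨hd, hd1, hc2⟩ := basics hg
  obtain ⟨R, hR, hRs⟩ := far_small hlim hη
  -- find c > 0 with η g''(c) = 1
  have hcont : ContinuousOn (fun v => η * deriv (deriv g) v) (Set.Icc 0 R) :=
    (continuous_const.mul hc2).continuousOn
  have hivt := intermediate_value_Icc' hR.le hcont
  have hRval : η * deriv (deriv g) R < 1 := hRs R (by rw [abs_of_pos hR])
  obtain ⟨c, hc, hceq⟩ := hivt (show (1:ℝ) ∈ Set.Icc (η * deriv (deriv g) R)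
    (η * deriv (deriv g) 0) from ⟨hRval.le, by linarith⟩)
  have hceq' : η * deriv (deriv g) c = 1 := hceq
  have hcpos : 0 < c := by
    rcases eq_or_lt_of_le hc.1 with h | h
    · exfalso; rw [← h] at hceq'; linarith
    · exact h
  -- derivative of the step map
  have hstep : ∀ v : ℝ, HasDerivAt (fun y => y - η * deriv g y)
      (1 - η * deriv (deriv g) v) v := by
    intro v
    exact (hasDerivAt_id v).sub (((hd1 v).hasDerivAt).const_mul η)
  have hderiv : ∀ v : ℝ, deriv (fun y => y - η * deriv g y) v = 1 - η * deriv (deriv g) v :=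
    fun v => (hstep v).deriv
  have hcontstep : Continuous (fun y => y - η * deriv g y) :=
    continuous_id.sub (continuous_const.mul hd1.continuous)
  -- signs
  have hneg : ∀ v : ℝ, |v| < c → deriv (fun y => y - η * deriv g y) v < 0 := by
    intro v hv
    rw [hderiv]
    have := hstr c v (by rwa [abs_of_pos hcpos])
    nlinarith
  have hposs : ∀ v : ℝ, c < |v| → 0 < deriv (fun y => y - η * deriv g y) v := by
    intro v hv
    rw [hderiv]
    have := hstr v c (by rw [abs_of_pos hcpos]; exact hv)
    nlinarith
  -- monotonicity on the three pieces
  have hm1 : StrictMonoOn (fun y => y - η * deriv g y) (Set.Iic (-c)) := by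
    apply strictMonoOn_of_deriv_pos (convex_Iic _) hcontstep.continuousOn
    intro v hv
    rw [interior_Iic, Set.mem_Iio] at hv
    exact hposs v (by rw [abs_of_neg (by linarith : v < 0)]; linarith)
  have hm2 : StrictAntiOn (fun y => y - η * deriv g y) (Set.Icc (-c) c) := by
    apply strictAntiOn_of_deriv_neg (convex_Icc _ _) hcontstep.continuousOn
    intro v hv
    rw [interior_Icc, Set.mem_Ioo] at hv
    exact hneg v (abs_lt.mpr ⟨hv.1, hv.2⟩)
  have hm3 : StrictMonoOn (fun y => y - η * deriv g y) (Set.Ici c) := by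
    apply strictMonoOn_of_deriv_pos (convex_Ici _) hcontstep.continuousOn
    intro v hv
    rw [interior_Ici, Set.mem_Ioi] at hv
    exact hposs v (by rw [abs_of_pos (by linarith : 0 < v)]; linarith)
  intro w
  have hsub : {v : ℝ | v - η * deriv g v = w} ⊆
      ({v | v - η * deriv g v = w} ∩ Set.Iic (-c)) ∪
      ({v | v - η * deriv g v = w} ∩ Set.Icc (-c) c) ∪
      ({v | v - η * deriv g v = w} ∩ Set.Ici c) := by
    intro v hv
    rcases le_total v (-c) with h | h
    · exact Or.inl (Or.inl ⟨hv, h⟩)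
    · rcases le_total v c with h2 | h2
      · exact Or.inl (Or.inr ⟨hv, h, h2⟩)
      · exact Or.inr ⟨hv, h2⟩
  apply Set.Countable.mono hsub
  apply Set.Countable.union
  apply Set.Countable.union
  · apply Set.Subsingleton.countable
    intro v1 hv1 v2 hv2
    exact hm1.injOn hv1.2 hv2.2 (by rw [hv1.1, hv2.1])
  · apply Set.Subsingleton.countable
    intro v1 hv1 v2 hv2
    exact hm2.injOn hv1.2 hv2.2 (by rw [hv1.1, hv2.1])
  · apply Set.Subsingleton.countable
    intro v1 hv1 v2 hv2
    exact hm3.injOn hv1.2 hv2.2 (by rw [hv1.1, hv2.1])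

/-- The set of initializations whose orbit hits 0 is countable. -/
lemma badset_countable (hg : ContDiff ℝ 2 g)
    (hstr : ∀ s t : ℝ, |t| < |s| → deriv (deriv g) s < deriv (deriv g) t)
    (hlim : Filter.Tendsto (deriv (deriv g)) (Filter.cocompact ℝ) (nhds 0))
    (hη : 0 < η) (hB : 2 < η * deriv (deriv g) 0) :
    {v : ℝ | ∃ t : ℕ, (fun y => y - η * deriv g y)^[t] v = 0}.Countable := by
  have hrw : {v : ℝ | ∃ t : ℕ, (fun y => y - η * deriv g y)^[t] v = 0} =
      ⋃ t : ℕ, ((fun y => y - η * deriv g y)^[t]) ⁻¹' {0} := by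
    ext v; simp [Set.mem_iUnion]
  rw [hrw]
  apply Set.countable_iUnion
  intro t
  induction t with
  | zero => simp
  | succ t ih =>
    have : ((fun y => y - η * deriv g y)^[t+1]) ⁻¹' {0} =
        (fun y => y - η * deriv g y) ⁻¹' (((fun y => y - η * deriv g y)^[t]) ⁻¹' {0}) := by
      ext v
      simp [Function.iterate_succ_apply]
    rw [this]
    have hpre : (fun y => y - η * deriv g y) ⁻¹' (((fun y => y - η * deriv g y)^[t]) ⁻¹' {0}) =
        ⋃ w ∈ ((fun y => y - η * deriv g y)^[t]) ⁻¹' {0}, {v : ℝ | v - η * deriv g v = w} := by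
      ext v
      simp only [Set.mem_preimage, Set.mem_iUnion, Set.mem_setOf_eq]
      constructor
      · intro h; exact ⟨_, h, rfl⟩
      · rintro ⟨w, hw, hv⟩; rw [hv]; exact hw
    rw [hpre]
    exact Set.Countable.biUnion ih (fun w _ => fiber_countable hg hstr hlim hη hB w)

end Part6


namespace MultiD
open MeasureTheory

lemma hyperplane_null (n : ℕ) (u : EuclideanSpace ℝ (Fin n)) (hu : ⟪u, u⟫ = 1) (s : ℝ) :
    volume {x : EuclideanSpace ℝ (Fin n) | ⟪u, x⟫ = s} = 0 := by
  have hu0 : u ≠ 0 := by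
    intro h; rw [h, inner_zero_left] at hu; norm_num at hu
  set K : Submodule ℝ (EuclideanSpace ℝ (Fin n)) := LinearMap.ker ((innerSL ℝ u) : EuclideanSpace ℝ (Fin n) →L[ℝ] ℝ).toLinearMap with hKdef
  have hker : K ≠ ⊤ := by
    intro h
    have h2 : u ∈ K := h ▸ Submodule.mem_top
    rw [hKdef, LinearMap.mem_ker] at h2
    have : ⟪u, u⟫ = 0 := h2
    rw [hu] at this; norm_num at this
  have hK : volume (K : Set (EuclideanSpace ℝ (Fin n))) = 0 :=
    Measure.addHaar_submodule _ _ hker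
  have hset : {x : EuclideanSpace ℝ (Fin n) | ⟪u, x⟫ = s} =
      (fun x => (-(s • u)) + x) ⁻¹' (K : Set (EuclideanSpace ℝ (Fin n))) := by
    ext x
    simp only [Set.mem_setOf_eq, Set.mem_preimage, SetLike.mem_coe, hKdef, LinearMap.mem_ker,
      ContinuousLinearMap.coe_coe, innerSL_apply_apply]
    rw [inner_add_right, inner_neg_right, inner_smul_right, hu]
    constructor
    · intro h; rw [h]; ring
    · intro h; linarith
  rw [hset, measure_preimage_add]
  exact hK

lemma gradient_formula (n : ℕ) (p : OrthonormalBasis (Fin n) ℝ (EuclideanSpace ℝ (Fin n)))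
    (f : Fin n → ℝ → ℝ) (hf : ∀ i, Differentiable ℝ (f i))
    (F : EuclideanSpace ℝ (Fin n) → ℝ)
    (hF : ∀ x : EuclideanSpace ℝ (Fin n), F x = ∑ i, f i ⟪p i, x⟫)
    (x : EuclideanSpace ℝ (Fin n)) :
    gradient F x = ∑ i, (deriv (f i) ⟪p i, x⟫) • p i := by
  have hterm : ∀ i : Fin n, HasFDerivAt (fun y : EuclideanSpace ℝ (Fin n) => f i ⟪p i, y⟫)
      ((deriv (f i) ⟪p i, x⟫) • (innerSL ℝ (p i))) x := by
    intro i
    exact ((hf i ⟪p i, x⟫).hasDerivAt).comp_hasFDerivAt x (innerSL ℝ (p i)).hasFDerivAt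
  have hsum : HasFDerivAt F (∑ i, (deriv (f i) ⟪p i, x⟫) • (innerSL ℝ (p i))) x := by
    have h1 : HasFDerivAt (fun y => ∑ i, f i ⟪p i, y⟫)
        (∑ i, (deriv (f i) ⟪p i, x⟫) • (innerSL ℝ (p i))) x :=
      HasFDerivAt.fun_sum (fun i _ => hterm i)
    have h2 : F = fun y => ∑ i, f i ⟪p i, y⟫ := funext hF
    rw [h2]
    exact h1
  have hgrad : HasGradientAt F (∑ i, (deriv (f i) ⟪p i, x⟫) • p i) x := by
    rw [hasGradientAt_iff_hasFDerivAt]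
    convert hsum using 1
    case e'_4 => rfl
    case e'_8 => rfl
    ext y
    simp only [ContinuousLinearMap.sum_apply, ContinuousLinearMap.coe_smul', Pi.smul_apply,
      innerSL_apply_apply, smul_eq_mul]
    rw [InnerProductSpace.toDual_apply_apply, sum_inner]
    congr 1
    ext i
    rw [real_inner_smul_left]
  exact hgrad.gradient

end MultiD

/-- For `f(x) = Σᵢ fᵢ(pᵢᵀ x)` with each `fᵢ` strictly subquadratic
and `fᵢ'' → 0` at infinity, except for a Lebesgue-null set of initializations,
each component `z_t⁽ⁱ⁾ = pᵢᵀ x_t` of the gradient descent trajectory converges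
to `0` when `η ≤ 2/fᵢ''(0)`, and otherwise converges to the 2-periodic solution
`{± x_η⁽ⁱ⁾}` where `x_η⁽ⁱ⁾` is the unique positive solution of
`η fᵢ'(x) = 2x`. -/
theorem gd_eigendecomposed_edge_of_stability
    (n : ℕ) (p : OrthonormalBasis (Fin n) ℝ (EuclideanSpace ℝ (Fin n)))
    (f : Fin n → ℝ → ℝ) (hf : ∀ i, ContDiff ℝ 2 (f i))
    (heven : ∀ i, ∀ x : ℝ, f i x = f i (-x)) (h0 : ∀ i, f i 0 = 0)
    (hpos : ∀ i, ∀ x : ℝ, 0 < deriv (deriv (f i)) x)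
    (hstrict : ∀ i, ∀ s t : ℝ, |t| < |s| → deriv (deriv (f i)) s < deriv (deriv (f i)) t)
    (hlim : ∀ i, Filter.Tendsto (deriv (deriv (f i))) (Filter.cocompact ℝ) (nhds 0))
    (F : EuclideanSpace ℝ (Fin n) → ℝ)
    (hF : ∀ x : EuclideanSpace ℝ (Fin n), F x = ∑ i, f i ⟪p i, x⟫)
    (η : ℝ) (hη : 0 < η) :
    ∃ A : Set (EuclideanSpace ℝ (Fin n)), MeasureTheory.volume A = 0 ∧
      ∀ x₀ : EuclideanSpace ℝ (Fin n), x₀ ∉ A →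
        ∀ x : ℕ → EuclideanSpace ℝ (Fin n), x 0 = x₀ →
          (∀ t : ℕ, x (t + 1) = x t - η • gradient F (x t)) →
          ∀ i : Fin n,
            (η ≤ 2 / deriv (deriv (f i)) 0 →
              Filter.Tendsto (fun t => ⟪p i, x t⟫) Filter.atTop (nhds 0)) ∧
            (2 / deriv (deriv (f i)) 0 < η →
              ∃ xη : ℝ, 0 < xη ∧ η * deriv (f i) xη = 2 * xη ∧
                (∀ y : ℝ, 0 < y → η * deriv (f i) y = 2 * y → y = xη) ∧
                Filter.Tendsto (fun t => |⟪p i, x t⟫|) Filter.atTop (nhds xη) ∧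
                Filter.Tendsto (fun t => ⟪p i, x t⟫ + ⟪p i, x (t + 1)⟫)
                  Filter.atTop (nhds 0)) := by
  classical
  set S : Fin n → Set ℝ :=
    fun i => {v : ℝ | ∃ t : ℕ, (fun y => y - η * deriv (f i) y)^[t] v = 0} with hS
  refine ⟨⋃ i : Fin n, ⋃ (_ : 2 / deriv (deriv (f i)) 0 < η),
    {x₀ : EuclideanSpace ℝ (Fin n) | ⟪p i, x₀⟫ ∈ S i}, ?_, ?_⟩
  · apply MeasureTheory.measure_iUnion_null; intro i
    apply MeasureTheory.measure_iUnion_null; intro hi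
    have h0i : 0 < deriv (deriv (f i)) 0 := hpos i 0
    have hBcase : 2 < η * deriv (deriv (f i)) 0 := by
      rw [div_lt_iff₀ h0i] at hi; linarith
    have hScnt : (S i).Countable :=
      Part6.badset_countable (hf i) (hstrict i) (hlim i) hη hBcase
    have hrw : {x₀ : EuclideanSpace ℝ (Fin n) | ⟪p i, x₀⟫ ∈ S i} =
        ⋃ s ∈ S i, {x₀ : EuclideanSpace ℝ (Fin n) | ⟪p i, x₀⟫ = s} := by
      ext x₀; simp
    rw [hrw, MeasureTheory.measure_biUnion_null_iff hScnt]
    intro s _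
    exact MultiD.hyperplane_null n (p i)
      (by rw [real_inner_self_eq_norm_sq, p.orthonormal.1 i]; norm_num) s
  · intro x₀ hx₀ x hx0 hrec i
    have hcomp : ∀ t, ⟪p i, x (t+1)⟫ = ⟪p i, x t⟫ - η * deriv (f i) ⟪p i, x t⟫ := by
      intro t
      rw [hrec t, inner_sub_right, real_inner_smul_right,
        MultiD.gradient_formula n p f (fun j => (EoS.basics (hf j)).1) F hF (x t),
        p.orthonormal.inner_right_fintype (fun j => deriv (f j) ⟪p j, x t⟫) i]
    have hiter : ∀ t, ⟪p i, x t⟫ = (fun y => y - η * deriv (f i) y)^[t] ⟪p i, x₀⟫ := by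
      intro t
      induction t with
      | zero => simp [hx0]
      | succ t ih => rw [Function.iterate_succ_apply', ← ih, hcomp t]
    have h0i : 0 < deriv (deriv (f i)) 0 := hpos i 0
    constructor
    · intro hcase
      have hA : η * deriv (deriv (f i)) 0 ≤ 2 := by
        rw [le_div_iff₀ h0i] at hcase; linarith
      exact Part2.convA (hf i) (heven i) (hpos i) (hstrict i) hη hA _ hcomp
    · intro hcase
      have hB : 2 < η * deriv (deriv (f i)) 0 := by
        rw [div_lt_iff₀ h0i] at hcase; linarith
      obtain ⟨xe, hxe, heqq, huniq⟩ :=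
        Part3.exB (hf i) (heven i) (hpos i) (hstrict i) (hlim i) hη hB
      have hnz : ∀ t, ⟪p i, x t⟫ ≠ 0 := by
        intro t hzero
        apply hx₀
        refine Set.mem_iUnion.mpr ⟨i, Set.mem_iUnion.mpr ⟨hcase, ?_⟩⟩
        exact ⟨t, by rw [← hiter t]; exact hzero⟩
      obtain ⟨hc1, hc2⟩ :=
        Part5.convB (hf i) (heven i) (hpos i) (hstrict i) hη hxe heqq _ hcomp hnz
      exact ⟨xe, hxe, heqq, huniq, hc1, hc2⟩
end

section
/- Let f : ℝⁿ → ℝ be twice continuously differentiable with a unique global minimum x*, and suppose there is c > 0 with ∇f(x)ᵀ(x − x*) ≥ c‖∇f(x)‖·‖x − x*‖ for all x ∈ ℝⁿ, and ‖∇f(x)‖/‖x − x*‖ → 0 as ‖x‖ → ∞. Then for every η > 0 there exists R_η > 0 such that the closed Euclidean ball B_{R_η}(x*) is invariant under the one-step gradient descent map h(x) = x − η∇f(x): if x ∈ B_{R_η}(x*) then h(x) ∈ B_{R_η}(x*). -/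
open scoped RealInnerProductSpace

/-- For a subquadratic function `f` (unique global minimum `x*`,
gradient aligned away from `x*` with constant `c > 0`, and
`‖∇f(x)‖/‖x - x*‖ → 0` as `‖x‖ → ∞`), for every learning rate `η > 0` there is
a radius `R_η > 0` such that the closed ball `B_{R_η}(x*)` is invariant under
the one-step gradient descent map `h(x) = x - η ∇f(x)`. -/
theorem gd_invariant_ball
    (n : ℕ) (f : EuclideanSpace ℝ (Fin n) → ℝ) (hf : ContDiff ℝ 2 f)
    (xstar : EuclideanSpace ℝ (Fin n))
    (hmin : ∀ y : EuclideanSpace ℝ (Fin n), y ≠ xstar → f xstar < f y)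
    (c : ℝ) (hc : 0 < c)
    (halign : ∀ x : EuclideanSpace ℝ (Fin n),
      c * (‖gradient f x‖ * ‖x - xstar‖) ≤ ⟪gradient f x, x - xstar⟫)
    (hlim : Filter.Tendsto (fun x : EuclideanSpace ℝ (Fin n) => ‖gradient f x‖ / ‖x - xstar‖)
      (Filter.cocompact (EuclideanSpace ℝ (Fin n))) (nhds 0)) :
    ∀ η : ℝ, 0 < η → ∃ R : ℝ, 0 < R ∧
      ∀ x ∈ Metric.closedBall xstar R,
        x - η • gradient f x ∈ Metric.closedBall xstar R := by
  intro η hη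
  -- continuity of the gradient
  have hgc : Continuous (fun x => gradient f x) := by
    have h1 : Continuous (fderiv ℝ f) := hf.continuous_fderiv (by norm_num)
    have : ∀ x, gradient f x = (InnerProductSpace.toDual ℝ _).symm (fderiv ℝ f x) := fun x => rfl
    exact ((InnerProductSpace.toDual ℝ
      (EuclideanSpace ℝ (Fin n))).symm.continuous.comp h1 : _)
  -- from hlim: small gradient far away
  have hε : (0:ℝ) < 2 * c / η := by positivity
  have h1 : ∀ᶠ x in Filter.cocompact (EuclideanSpace ℝ (Fin n)),
      ‖gradient f x‖ / ‖x - xstar‖ < 2 * c / η := by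
    have := Metric.tendsto_nhds.mp hlim (2 * c / η) hε
    simpa [Real.dist_eq] using this
  obtain ⟨K, hK, hKsmall⟩ := Filter.hasBasis_cocompact.eventually_iff.mp h1
  obtain ⟨r, hr⟩ := hK.isBounded.subset_closedBall xstar
  set R₀ : ℝ := max r 1 with hR₀def
  have hR₀pos : (0:ℝ) < R₀ := lt_of_lt_of_le one_pos (le_max_right _ _)
  -- gradient bound on the compact ball of radius R₀
  obtain ⟨M, hM⟩ := (isCompact_closedBall xstar R₀).exists_bound_of_continuousOn
    (hgc.continuousOn (s := Metric.closedBall xstar R₀))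
  have hM0 : 0 ≤ M := le_trans (norm_nonneg _) (hM xstar (by simp [hR₀pos.le]))
  refine ⟨R₀ + η * M, by positivity, ?_⟩
  intro x hx
  simp only [Metric.mem_closedBall, dist_eq_norm] at hx ⊢
  by_cases hcase : ‖x - xstar‖ ≤ R₀
  · -- near case
    have hMx : ‖gradient f x‖ ≤ M := hM x (by simpa [Metric.mem_closedBall, dist_eq_norm])
    calc ‖x - η • gradient f x - xstar‖ = ‖(x - xstar) - η • gradient f x‖ := by
          rw [sub_right_comm]
      _ ≤ ‖x - xstar‖ + ‖η • gradient f x‖ := norm_sub_le _ _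
      _ ≤ R₀ + η * M := by
          have : ‖η • gradient f x‖ = η * ‖gradient f x‖ := by
            rw [norm_smul, Real.norm_eq_abs, abs_of_pos hη]
          rw [this]
          exact add_le_add hcase (by nlinarith)
  · push_neg at hcase
    -- x is outside K, so the gradient is small
    have hxK : x ∉ K := by
      intro hxK
      have := hr hxK
      simp only [Metric.mem_closedBall, dist_eq_norm] at this
      have : ‖x - xstar‖ ≤ R₀ := le_trans this (le_max_left _ _)
      linarith
    have hsmall := hKsmall hxK
    have hnorm_pos : 0 < ‖x - xstar‖ := lt_trans hR₀pos hcase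
    rw [div_lt_iff₀ hnorm_pos] at hsmall
    have hg : η * ‖gradient f x‖ ≤ 2 * c * ‖x - xstar‖ := by
      calc η * ‖gradient f x‖ ≤ η * (2 * c / η * ‖x - xstar‖) :=
            mul_le_mul_of_nonneg_left hsmall.le hη.le
        _ = 2 * c * ‖x - xstar‖ := by field_simp
    -- norm squared computation
    set g := gradient f x with hg_def
    have hsq : ‖(x - xstar) - η • g‖ ^ 2
        = ‖x - xstar‖ ^ 2 - 2 * (η * ⟪g, x - xstar⟫) + η ^ 2 * ‖g‖ ^ 2 := by
      rw [norm_sub_sq_real, real_inner_smul_right, norm_smul, Real.norm_eq_abs,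
        abs_of_pos hη, real_inner_comm]
      ring
    have halx := halign x
    rw [← hg_def] at halx
    have hkey : ‖(x - xstar) - η • g‖ ^ 2 ≤ ‖x - xstar‖ ^ 2 := by
      rw [hsq]
      nlinarith [mul_le_mul_of_nonneg_left halx (by positivity : (0:ℝ) ≤ 2 * η),
        mul_le_mul_of_nonneg_right hg (mul_nonneg hη.le (norm_nonneg g))]
    have hle : ‖(x - xstar) - η • g‖ ≤ ‖x - xstar‖ := by
      nlinarith [norm_nonneg ((x - xstar) - η • g), norm_nonneg (x - xstar)]
    calc ‖x - η • g - xstar‖ = ‖(x - xstar) - η • g‖ := by rw [sub_right_comm]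
      _ ≤ ‖x - xstar‖ := hle
      _ ≤ R₀ + η * M := by nlinarith
end

section
/- Let f : ℝ → ℝ be differentiable, h : ℝ^d → ℝ be differentiable and strictly positive, and η > 0. Suppose (x, y) ∈ ℝ^d × ℝ satisfies the 2-periodicity (edge-of-stability) condition η f'(h(x)·y)·h(x) = 2y. Then the gradient descent update of the x-component of F(x, y) = f(h(x)·y) simplifies to a gradient descent step on log h with step size 2y²: x − η f'(h(x)·y)·y·∇h(x) = x − 2y²·∇(log h)(x). -/
/-- Under the quasistatic 2-periodicity (edge-of-stability)
condition `η f'(h(x) y) h(x) = 2 y`, the gradient descent update of the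
`x`-component of `F(x, y) = f(h(x) y)` equals a gradient descent step on
`log h` with step size `2 y²`. -/
theorem quasistatic_update_is_log_flatness_descent
    (d : ℕ) (f : ℝ → ℝ) (hf : Differentiable ℝ f)
    (h : EuclideanSpace ℝ (Fin d) → ℝ) (hh : Differentiable ℝ h)
    (hhpos : ∀ z : EuclideanSpace ℝ (Fin d), 0 < h z)
    (η : ℝ) (hη : 0 < η)
    (x : EuclideanSpace ℝ (Fin d)) (y : ℝ)
    (hper : η * deriv f (h x * y) * h x = 2 * y) :
    x - (η * deriv f (h x * y) * y) • gradient h x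
      = x - (2 * y ^ 2) • gradient (fun z => Real.log (h z)) x := by
  have hx0 : h x ≠ 0 := (hhpos x).ne'
  have hg : HasGradientAt h (gradient h x) x := (hh x).hasGradientAt
  have hlog : HasGradientAt (fun z => Real.log (h z)) ((h x)⁻¹ • gradient h x) x := by
    rw [hasGradientAt_iff_hasFDerivAt, map_smul]
    exact (Real.hasDerivAt_log hx0).comp_hasFDerivAt x hg.hasFDerivAt
  rw [hlog.gradient, smul_smul]
  congr 1
  have : η * deriv f (h x * y) = 2 * y / h x := by
    field_simp; linarith [hper]
  rw [this]
  field_simp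
end

section
/- Let σ(z) = max(z, 0), f(x, w) = 1 − σ(wx + 1) + 2σ(wx) − σ(wx − 1), and let 0 < x₁ ≤ x₂ ≤ ⋯ ≤ x_n. Define the empirical loss L(w) = (1/n) Σ_{i=1}^n f(x_i, w)². Then L is the piecewise quadratic/constant function: L(w) = ((1/n) Σ_{i=1}^n x_i²)·w² for |w| ≤ 1/x_n; L(w) = ((1/n) Σ_{i=1}^k x_i²)·w² + (n−k)/n for 1/x_{k+1} ≤ |w| ≤ 1/x_k, k = 1, …, n−1; and L(w) = 1 for |w| ≥ 1/x₁. -/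
private lemma relu_sq_small (t : ℝ) (ht : |t| ≤ 1) :
    (1 - max (t + 1) 0 + 2 * max t 0 - max (t - 1) 0) ^ 2 = t ^ 2 := by
  obtain ⟨h1, h2⟩ := abs_le.mp ht
  rw [max_eq_left (by linarith : (0:ℝ) ≤ t + 1), max_eq_right (by linarith : t - 1 ≤ 0)]
  rcases le_total t 0 with h | h
  · rw [max_eq_right h]; ring
  · rw [max_eq_left h]; ring

private lemma relu_sq_big (t : ℝ) (ht : 1 ≤ |t|) :
    (1 - max (t + 1) 0 + 2 * max t 0 - max (t - 1) 0) ^ 2 = 1 := by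
  rcases le_abs.mp ht with h | h
  · rw [max_eq_left (by linarith : (0:ℝ) ≤ t + 1), max_eq_left (by linarith : (0:ℝ) ≤ t),
      max_eq_left (by linarith : (0:ℝ) ≤ t - 1)]; ring
  · rw [max_eq_right (by linarith : t + 1 ≤ 0), max_eq_right (by linarith : t ≤ 0),
      max_eq_right (by linarith : t - 1 ≤ 0)]; ring

/-- For sorted positive data `x₀ ≤ x₁ ≤ ⋯ ≤ x_{n-1}` (0-indexed)
and the empirical loss `L(w) = (1/n) Σᵢ f(xᵢ, w)²` of the two-layer ReLU
network `f(x, w) = 1 - σ(wx+1) + 2σ(wx) - σ(wx-1)`, the loss is the piecewise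
quadratic/constant function described in the paper. -/
theorem empirical_loss_piecewise
    (σ : ℝ → ℝ) (hσ : ∀ z : ℝ, σ z = max z 0)
    (f : ℝ → ℝ → ℝ)
    (hf : ∀ x w : ℝ, f x w = 1 - σ (w * x + 1) + 2 * σ (w * x) - σ (w * x - 1))
    (n : ℕ) (hn : 0 < n) (x : ℕ → ℝ)
    (hpos : 0 < x 0)
    (hmono : ∀ i j : ℕ, i ≤ j → j < n → x i ≤ x j)
    (L : ℝ → ℝ)
    (hL : ∀ w : ℝ, L w = (1 / (n : ℝ)) * ∑ i ∈ Finset.range n, (f (x i) w) ^ 2) :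
    (∀ w : ℝ, |w| ≤ 1 / x (n - 1) →
      L w = ((1 / (n : ℝ)) * ∑ i ∈ Finset.range n, (x i) ^ 2) * w ^ 2) ∧
    (∀ k : ℕ, 1 ≤ k → k ≤ n - 1 → ∀ w : ℝ,
      1 / x k ≤ |w| → |w| ≤ 1 / x (k - 1) →
      L w = ((1 / (n : ℝ)) * ∑ i ∈ Finset.range k, (x i) ^ 2) * w ^ 2
            + ((n : ℝ) - (k : ℝ)) / (n : ℝ)) ∧
    (∀ w : ℝ, 1 / x 0 ≤ |w| → L w = 1) := by
  have hxpos : ∀ i, i < n → 0 < x i := fun i hi =>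
    lt_of_lt_of_le hpos (hmono 0 i (Nat.zero_le i) hi)
  -- key pointwise lemma
  have key_small : ∀ (y w : ℝ), 0 < y → |w| ≤ 1 / y → f y w ^ 2 = y ^ 2 * w ^ 2 := by
    intro y w hy hw
    rw [hf, hσ, hσ, hσ]
    have ht : |w * y| ≤ 1 := by
      rw [abs_mul, abs_of_pos hy]
      calc |w| * y ≤ (1 / y) * y := by
            exact mul_le_mul_of_nonneg_right hw hy.le
        _ = 1 := by field_simp
    have := relu_sq_small (w * y) ht
    rw [this]; ring
  have key_big : ∀ (y w : ℝ), 0 < y → 1 / y ≤ |w| → f y w ^ 2 = 1 := by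
    intro y w hy hw
    rw [hf, hσ, hσ, hσ]
    have ht : 1 ≤ |w * y| := by
      rw [abs_mul, abs_of_pos hy]
      calc (1 : ℝ) = (1 / y) * y := by field_simp
        _ ≤ |w| * y := mul_le_mul_of_nonneg_right hw hy.le
    exact relu_sq_big (w * y) ht
  have hnlt : n - 1 < n := Nat.sub_lt hn one_pos
  refine ⟨?_, ?_, ?_⟩
  · intro w hw
    rw [hL]
    have hterm : ∀ i ∈ Finset.range n, f (x i) w ^ 2 = x i ^ 2 * w ^ 2 := by
      intro i hi
      rw [Finset.mem_range] at hi
      apply key_small _ _ (hxpos i hi)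
      refine hw.trans (one_div_le_one_div_of_le (hxpos i hi) ?_)
      exact hmono i (n - 1) (Nat.le_sub_one_of_lt hi) hnlt
    rw [Finset.sum_congr rfl hterm, ← Finset.sum_mul, mul_assoc]
  · intro k hk1 hkn w hw1 hw2
    have hkltn : k < n := lt_of_le_of_lt hkn hnlt |>.trans_le (le_refl n) |> id
    rw [hL, ← Finset.sum_range_add_sum_Ico _ hkltn.le]
    have hterm1 : ∀ i ∈ Finset.range k, f (x i) w ^ 2 = x i ^ 2 * w ^ 2 := by
      intro i hi
      rw [Finset.mem_range] at hi
      have hiltn : i < n := hi.trans hkltn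
      apply key_small _ _ (hxpos i hiltn)
      refine hw2.trans (one_div_le_one_div_of_le (hxpos i hiltn) ?_)
      exact hmono i (k - 1) (Nat.le_sub_one_of_lt hi) (lt_of_le_of_lt (Nat.sub_le k 1) hkltn)
    have hterm2 : ∀ i ∈ Finset.Ico k n, f (x i) w ^ 2 = 1 := by
      intro i hi
      rw [Finset.mem_Ico] at hi
      apply key_big _ _ (hxpos i hi.2)
      refine le_trans ?_ hw1
      exact one_div_le_one_div_of_le (hxpos k hkltn) (hmono k i hi.1 hi.2)
    rw [Finset.sum_congr rfl hterm1, Finset.sum_congr rfl hterm2, ← Finset.sum_mul,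
      Finset.sum_const, Nat.card_Ico, nsmul_eq_mul, mul_one]
    have hcast : ((n - k : ℕ) : ℝ) = (n : ℝ) - (k : ℝ) := by
      rw [Nat.cast_sub hkltn.le]
    rw [hcast]
    have hne : (n : ℝ) ≠ 0 := Nat.cast_ne_zero.mpr hn.ne'
    field_simp
  · intro w hw
    rw [hL]
    have hterm : ∀ i ∈ Finset.range n, f (x i) w ^ 2 = 1 := by
      intro i hi
      rw [Finset.mem_range] at hi
      apply key_big _ _ (hxpos i hi)
      refine le_trans ?_ hw
      exact one_div_le_one_div_of_le hpos (hmono 0 i (Nat.zero_le i) hi)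
    rw [Finset.sum_congr rfl hterm, Finset.sum_const, Finset.card_range, nsmul_eq_mul, mul_one]
    have hne : (n : ℝ) ≠ 0 := Nat.cast_ne_zero.mpr hn.ne'
    field_simp
end

section
/- Let σ(z) = max(z, 0), f(x, w) = 1 − σ(wx + 1) + 2σ(wx) − σ(wx − 1), let C > 0, and let μ be the uniform probability distribution on [0, C]. Then the population loss L(w) = (1/C) ∫_0^C f(x, w)² dx is given explicitly by L(w) = (C²/3)·w² if |w| ≤ 1/C, and L(w) = 1 − 2/(3C|w|) if |w| > 1/C. -/
lemma fsq_aux (t : ℝ) :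
    (1 - max (t + 1) 0 + 2 * max t 0 - max (t - 1) 0) ^ 2 = min (t ^ 2) 1 := by
  rcases le_total t (-1) with h | h
  · rw [max_eq_right (by linarith), max_eq_right (by linarith),
      max_eq_right (by linarith), min_eq_right (by nlinarith)]; ring
  rcases le_total t 0 with h2 | h2
  · rw [max_eq_left (by linarith), max_eq_right h2,
      max_eq_right (by linarith), min_eq_left (by nlinarith)]; ring
  rcases le_total t 1 with h3 | h3
  · rw [max_eq_left (by linarith), max_eq_left h2,
      max_eq_right (by linarith), min_eq_left (by nlinarith)]; ring
  · rw [max_eq_left (by linarith), max_eq_left (by linarith),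
      max_eq_left (by linarith), min_eq_right (by nlinarith)]; ring

/-- For the uniform distribution on `[0, C]`, the population loss
`L(w) = (1/C) ∫₀^C f(x, w)² dx` of the two-layer ReLU network
`f(x, w) = 1 - σ(wx+1) + 2σ(wx) - σ(wx-1)` equals `(C²/3) w²` for
`|w| ≤ 1/C`, and `1 - 2/(3C|w|)` for `|w| > 1/C`. -/
theorem uniform_population_loss
    (σ : ℝ → ℝ) (hσ : ∀ z : ℝ, σ z = max z 0)
    (f : ℝ → ℝ → ℝ)
    (hf : ∀ x w : ℝ, f x w = 1 - σ (w * x + 1) + 2 * σ (w * x) - σ (w * x - 1))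
    (C : ℝ) (hC : 0 < C)
    (L : ℝ → ℝ)
    (hL : ∀ w : ℝ, L w = (1 / C) * ∫ x in (0 : ℝ)..C, (f x w) ^ 2) :
    ∀ w : ℝ,
      (|w| ≤ 1 / C → L w = (C ^ 2 / 3) * w ^ 2) ∧
      (1 / C < |w| → L w = 1 - 2 / (3 * C * |w|)) := by
  intro w
  have hfsq : ∀ x : ℝ, f x w ^ 2 = min ((w * x) ^ 2) 1 := by
    intro x; rw [hf, hσ, hσ, hσ]; exact fsq_aux (w * x)
  have hcont : Continuous fun x : ℝ => min ((w * x) ^ 2) 1 :=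
    ((continuous_const.mul continuous_id).pow 2).min continuous_const
  constructor
  · intro hw
    rw [hL]
    have key : (∫ x in (0:ℝ)..C, f x w ^ 2) = ∫ x in (0:ℝ)..C, w ^ 2 * x ^ 2 := by
      apply intervalIntegral.integral_congr
      intro x hx
      rw [Set.uIcc_of_le hC.le] at hx
      obtain ⟨hx0, hxC⟩ := hx
      have hw2 : w ^ 2 ≤ (1 / C) ^ 2 := by
        rw [← sq_abs]; exact pow_le_pow_left₀ (abs_nonneg w) hw 2
      have hx2 : x ^ 2 ≤ C ^ 2 := pow_le_pow_left₀ hx0 hxC 2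
      have hle : (w * x) ^ 2 ≤ 1 := by
        have : w ^ 2 * x ^ 2 ≤ (1 / C) ^ 2 * C ^ 2 := by
          apply mul_le_mul hw2 hx2 (sq_nonneg x) (sq_nonneg _)
        have hC2 : (1 / C) ^ 2 * C ^ 2 = 1 := by field_simp
        nlinarith [this]
      show f x w ^ 2 = w ^ 2 * x ^ 2
      rw [hfsq, min_eq_left hle]; ring
    rw [key, intervalIntegral.integral_const_mul, integral_pow]
    field_simp
    ring
  · intro hw
    have habs : 0 < |w| := lt_trans (by positivity) hw
    set a : ℝ := 1 / |w| with ha_def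
    have ha0 : 0 < a := by positivity
    have haC : a < C := by
      rw [ha_def, div_lt_iff₀ habs]
      rw [div_lt_iff₀ hC] at hw
      linarith [hw]
    rw [hL]
    have hrw : (∫ x in (0:ℝ)..C, f x w ^ 2) = ∫ x in (0:ℝ)..C, min ((w * x) ^ 2) 1 := by
      simp_rw [hfsq]
    have hsplit : (∫ x in (0:ℝ)..C, min ((w * x) ^ 2) 1)
        = (∫ x in (0:ℝ)..a, min ((w * x) ^ 2) 1) + ∫ x in a..C, min ((w * x) ^ 2) 1 :=
      (intervalIntegral.integral_add_adjacent_intervals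
        (hcont.intervalIntegrable 0 a) (hcont.intervalIntegrable a C)).symm
    have h1 : (∫ x in (0:ℝ)..a, min ((w * x) ^ 2) 1) = 1 / (3 * |w|) := by
      have : (∫ x in (0:ℝ)..a, min ((w * x) ^ 2) 1) = ∫ x in (0:ℝ)..a, w ^ 2 * x ^ 2 := by
        apply intervalIntegral.integral_congr
        intro x hx
        rw [Set.uIcc_of_le ha0.le] at hx
        obtain ⟨hx0, hxa⟩ := hx
        have hle : (w * x) ^ 2 ≤ 1 := by
          have h1 : |w| * x ≤ |w| * a := by nlinarith
          have h2 : |w| * a = 1 := by rw [ha_def]; field_simp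
          have h3 : |w * x| ≤ 1 := by
            rw [abs_mul, abs_of_nonneg hx0]; linarith
          nlinarith [abs_nonneg (w * x), sq_abs (w * x)]
        show min ((w * x) ^ 2) 1 = w ^ 2 * x ^ 2
        rw [min_eq_left hle]; ring
      rw [this, intervalIntegral.integral_const_mul, integral_pow]
      rw [ha_def]
      field_simp
      rw [← sq_abs w]; ring_nf; field_simp [habs.ne']
    have h2 : (∫ x in a..C, min ((w * x) ^ 2) 1) = C - a := by
      have : (∫ x in a..C, min ((w * x) ^ 2) 1) = ∫ x in a..C, (1:ℝ) := by
        apply intervalIntegral.integral_congr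
        intro x hx
        rw [Set.uIcc_of_le haC.le] at hx
        obtain ⟨hxa, hxC⟩ := hx
        have hge : 1 ≤ (w * x) ^ 2 := by
          have h1 : |w| * a ≤ |w| * x := by nlinarith
          have h2 : |w| * a = 1 := by rw [ha_def]; field_simp
          have h3 : 1 ≤ |w * x| := by
            rw [abs_mul, abs_of_nonneg (le_trans ha0.le hxa)]; linarith
          nlinarith [sq_abs (w * x)]
        show min ((w * x) ^ 2) 1 = 1
        rw [min_eq_right hge]
      rw [this]
      simp
    rw [hrw, hsplit, h1, h2, ha_def]
    field_simp
    ring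
end
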